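/- Let X be a continuous adapted ℝ^D-valued process on a filtered probability space satisfying the usual conditions. Then the following are equivalent: (i) X is free of simple arbitrage on finite time horizons; (ii) X satisfies two-way crossing (TWC) at bounded stopping times, and for every T > 0 the condition (NOA) on [0,T] holds, namely: for every [0,T]-valued stopping time σ with P(σ < T) > 0, every ε > 0, and every 𝓕_σ-measurable direction H, one has P({σ < T} ∩ {sup_{t∈[σ,T]} H(X_t − X_σ) < ε}) > 0. -/

import Mathlib

open MeasureTheory ProbabilityTheory Filter Set
open scoped ENNReal NNReal RealInnerProductSpace

namespace SimpleArbitrage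

variable {Ω : Type*} {mΩ : MeasurableSpace Ω}
variable {E : Type*} [NormedAddCommGroup E] [InnerProductSpace ℝ E] [MeasurableSpace E]

/-- The filtered probability space satisfies the usual conditions: the filtration is
right-continuous and contains all `P`-null sets. -/
def UsualConditions (F : Filtration ℝ mΩ) (P : Measure Ω) : Prop :=
  (∀ t : ℝ, (F t : MeasurableSpace Ω) = ⨅ s : Ioi t, F (s : ℝ)) ∧
  ∀ t : ℝ, ∀ N : Set Ω, P N = 0 → MeasurableSet[F t] N

/-- A (possibly infinite, extended-real-valued) stopping time. -/
def IsStoppingTimeE (F : Filtration ℝ mΩ) (σ : Ω → EReal) : Prop :=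
  ∀ t : ℝ, MeasurableSet[F t] {ω | σ ω ≤ (t : EReal)}

/-- `H` is `𝓕_σ`-measurable, where `σ` is a (possibly infinite) stopping time. -/
def MeasurableAtTime (F : Filtration ℝ mΩ) (σ : Ω → EReal) {α : Type*} [MeasurableSpace α]
    (H : Ω → α) : Prop :=
  ∀ B : Set α, MeasurableSet B → ∀ t : ℝ, MeasurableSet[F t] (H ⁻¹' B ∩ {ω | σ ω ≤ (t : EReal)})

/-- An `𝓕_σ`-measurable direction: an `𝓕_σ`-measurable random vector of norm one. -/
def IsDirection (F : Filtration ℝ mΩ) (P : Measure Ω) (σ : Ω → EReal) (H : Ω → E) : Prop :=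
  MeasurableAtTime F σ H ∧ ∀ᵐ ω ∂P, ‖H ω‖ = 1

/-- The no obvious arbitrage (NOA) condition: for every a.s. possibly finite stopping time `σ`
with `P(σ < ∞) > 0`, every `𝓕_σ`-measurable direction `H` and every `ε > 0`,
`P({σ < ∞} ∩ {sup_{t ∈ [σ,∞)} ⟪H, X t - X σ⟫ < ε}) > 0`. -/
def NOA (F : Filtration ℝ mΩ) (P : Measure Ω) (X : ℝ → Ω → E) : Prop :=
  ∀ σ : Ω → EReal, IsStoppingTimeE F σ → (∀ ω, 0 ≤ σ ω) → 0 < P {ω | σ ω < ⊤} →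
    ∀ H : Ω → E, IsDirection F P σ H → ∀ ε : ℝ, 0 < ε →
      0 < P ({ω | σ ω < ⊤} ∩
        {ω | ∃ δ : ℝ, δ < ε ∧ ∀ t : ℝ, σ ω ≤ (t : EReal) →
          ⟪H ω, X t ω - X (σ ω).toReal ω⟫ ≤ δ})

/-- A simple strategy: trading at finitely many a.s. finite stopping times
`0 = τ_0 ≤ τ_1 ≤ ⋯ ≤ τ_n`, holding the `𝓕_{τ_j}`-measurable portfolio `φ_j` on `(τ_j, τ_{j+1}]`. -/
structure SimpleStrategy (F : Filtration ℝ mΩ) (E : Type*) [MeasurableSpace E] where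
  n : ℕ
  τ : ℕ → Ω → ℝ
  φ : ℕ → Ω → E
  τ_zero : ∀ ω, τ 0 ω = 0
  τ_mono : ∀ j, j < n → ∀ ω, τ j ω ≤ τ (j + 1) ω
  τ_stopping : ∀ j, j ≤ n → IsStoppingTime F (fun ω => (τ j ω : WithTop ℝ))
  φ_meas : ∀ j, j < n → MeasurableAtTime F (fun ω => ((τ j ω : ℝ) : EReal)) (φ j)

/-- The wealth process `V_t(Φ;0)` of a simple strategy from initial capital `0`. -/
noncomputable def wealth {F : Filtration ℝ mΩ} (X : ℝ → Ω → E) (Φ : SimpleStrategy F E)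
    (t : ℝ) (ω : Ω) : ℝ :=
  ∑ j ∈ Finset.range Φ.n,
    ⟪Φ.φ j ω, X (min t (Φ.τ (j + 1) ω)) ω - X (min t (Φ.τ j ω)) ω⟫

/-- The terminal wealth `V_∞(Φ;0) = lim_{t → ∞} V_t(Φ;0)` of a simple strategy. -/
noncomputable def wealthEnd {F : Filtration ℝ mΩ} (X : ℝ → Ω → E) (Φ : SimpleStrategy F E)
    (ω : Ω) : ℝ :=
  ∑ j ∈ Finset.range Φ.n, ⟪Φ.φ j ω, X (Φ.τ (j + 1) ω) ω - X (Φ.τ j ω) ω⟫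

/-- `Φ` is an arbitrage: `V_∞(Φ;0) ≥ 0` a.s. and `P(V_∞(Φ;0) > 0) > 0`. -/
def IsArbitrage {F : Filtration ℝ mΩ} (P : Measure Ω) (X : ℝ → Ω → E)
    (Φ : SimpleStrategy F E) : Prop :=
  (∀ᵐ ω ∂P, 0 ≤ wealthEnd X Φ ω) ∧ 0 < P {ω | 0 < wealthEnd X Φ ω}

/-- `Φ` is `c`-admissible: `inf_{t ∈ [0,∞)} V_t(Φ;0) ≥ -c` a.s. -/
def IsAdmissible {F : Filtration ℝ mΩ} (P : Measure Ω) (X : ℝ → Ω → E)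
    (Φ : SimpleStrategy F E) (c : ℝ) : Prop :=
  ∀ᵐ ω ∂P, ∀ t : ℝ, 0 ≤ t → -c ≤ wealth X Φ t ω

/-- The model `X` is free of arbitrage with simple strategies. -/
def NoSimpleArbitrage (F : Filtration ℝ mΩ) (P : Measure Ω) (X : ℝ → Ω → E) : Prop :=
  ∀ Φ : SimpleStrategy F E, ¬ IsArbitrage P X Φ

/-- Wealth process of the two-stopping-time strategy `H 1_{(σ,τ]}`. -/
noncomputable def pairWealth (X : ℝ → Ω → E) (H : Ω → E) (σ τ : Ω → ℝ) (t : ℝ) (ω : Ω) : ℝ :=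
  ⟪H ω, X (min t (τ ω)) ω - X (min t (σ ω)) ω⟫

/-- There is a `0`-admissible arbitrage of the form `H 1_{(σ,τ]}` with bounded stopping
times `σ ≤ τ` and an `𝓕_σ`-measurable direction `H`. -/
def ExistsAdmissiblePairArbitrage (F : Filtration ℝ mΩ) (P : Measure Ω)
    (X : ℝ → Ω → E) : Prop :=
  ∃ (σ τ : Ω → ℝ) (H : Ω → E),
    IsStoppingTime F (fun ω => (σ ω : WithTop ℝ)) ∧ IsStoppingTime F (fun ω => (τ ω : WithTop ℝ)) ∧ (∀ ω, 0 ≤ σ ω) ∧ (∀ ω, σ ω ≤ τ ω) ∧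
    (∃ K : ℝ, ∀ ω, τ ω ≤ K) ∧
    IsDirection F P (fun ω => ((σ ω : ℝ) : EReal)) H ∧
    (∀ᵐ ω ∂P, ∀ t : ℝ, 0 ≤ t → 0 ≤ pairWealth X H σ τ t ω) ∧
    (∀ᵐ ω ∂P, 0 ≤ ⟪H ω, X (τ ω) ω - X (σ ω) ω⟫) ∧
    0 < P {ω | 0 < ⟪H ω, X (τ ω) ω - X (σ ω) ω⟫}

/-- `σ_H = inf { t ≥ σ : ⟪H, X t - X σ⟫ > 0 }`, as an extended real number (`⊤` if no such
time exists). -/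
noncomputable def hittingAfter (X : ℝ → Ω → E) (σ : Ω → EReal) (H : Ω → E) (ω : Ω) : EReal :=
  sInf {u : EReal | ∃ t : ℝ, u = (t : EReal) ∧ σ ω ≤ (t : EReal) ∧
    0 < ⟪H ω, X t ω - X (σ ω).toReal ω⟫}

/-- Two-way crossing at the stopping time `σ` along the direction `H`: `σ_H = σ_{-H}` a.s. -/
def TWCAt (P : Measure Ω) (X : ℝ → Ω → E) (σ : Ω → EReal) (H : Ω → E) : Prop :=
  ∀ᵐ ω ∂P, hittingAfter X σ H ω = hittingAfter X σ (fun ω' => -H ω') ω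

/-- Two-way crossing (TWC) at bounded stopping times. -/
def TWCBounded (F : Filtration ℝ mΩ) (P : Measure Ω) (X : ℝ → Ω → E) : Prop :=
  ∀ σ : Ω → ℝ, IsStoppingTime F (fun ω => (σ ω : WithTop ℝ)) → (∀ ω, 0 ≤ σ ω) → (∃ K : ℝ, ∀ ω, σ ω ≤ K) →
    ∀ H : Ω → E, IsDirection F P (fun ω => ((σ ω : ℝ) : EReal)) H →
      TWCAt P X (fun ω => ((σ ω : ℝ) : EReal)) H

/-- Two-way crossing (TWC) at a.s. finite stopping times. -/
def TWCFinite (F : Filtration ℝ mΩ) (P : Measure Ω) (X : ℝ → Ω → E) : Prop :=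
  ∀ σ : Ω → EReal, IsStoppingTimeE F σ → (∀ ω, 0 ≤ σ ω) → (∀ᵐ ω ∂P, σ ω < ⊤) →
    ∀ H : Ω → E, IsDirection F P σ H → TWCAt P X σ H

/-- A process is adapted to the filtration (on the relevant time interval `[0,∞)`). -/
def AdaptedProc {β : Type*} [TopologicalSpace β] (F : Filtration ℝ mΩ) (X : ℝ → Ω → β) : Prop :=
  ∀ t : ℝ, 0 ≤ t → StronglyMeasurable[F t] (X t)

/-- Right-continuity of paths. -/
def RightContinuousPaths {β : Type*} [TopologicalSpace β] (X : ℝ → Ω → β) : Prop :=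
  ∀ ω, ∀ t : ℝ, ContinuousWithinAt (fun s => X s ω) (Ici t) t

/-- Continuity of paths. -/
def ContinuousPaths {β : Type*} [TopologicalSpace β] (X : ℝ → Ω → β) : Prop :=
  ∀ ω, Continuous fun t => X t ω

/-- `M` is a martingale on the time interval `[0,∞)`. -/
def MartingaleOn [CompleteSpace E] (F : Filtration ℝ mΩ) (P : Measure Ω)
    (M : ℝ → Ω → E) : Prop :=
  (∀ t : ℝ, 0 ≤ t → StronglyMeasurable[F t] (M t)) ∧
  (∀ t : ℝ, 0 ≤ t → Integrable (M t) P) ∧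
  ∀ s t : ℝ, 0 ≤ s → s ≤ t → P[M t|F s] =ᵐ[P] M s

/-- `M` is a local martingale on `[0,∞)`: there is a localizing sequence of finite stopping
times increasing a.s. to `∞` such that each stopped process is a martingale. -/
def IsLocalMartingale [CompleteSpace E] (F : Filtration ℝ mΩ) (P : Measure Ω)
    (M : ℝ → Ω → E) : Prop :=
  ∃ τ : ℕ → Ω → ℝ, (∀ n, IsStoppingTime F (fun ω => (τ n ω : WithTop ℝ))) ∧ (∀ n ω, 0 ≤ τ n ω) ∧
    (∀ n ω, τ n ω ≤ τ (n + 1) ω) ∧ (∀ᵐ ω ∂P, Tendsto (fun n => τ n ω) atTop atTop) ∧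
    ∀ n, MartingaleOn F P fun t ω => M (min t (τ n ω)) ω

/-- `Z` is `a`-Hölder continuous on compacts: for each `K ∈ ℕ` there is a positive random
variable `C_K` with `‖Z t - Z s‖ ≤ C_K (t-s)^a` for `0 ≤ s ≤ t ≤ K`. -/
def HolderOnCompacts {β : Type*} [NormedAddCommGroup β] (Z : ℝ → Ω → β) (a : ℝ) : Prop :=
  ∀ K : ℕ, ∃ C : Ω → ℝ, (∀ ω, 0 < C ω) ∧
    ∀ ω, ∀ s t : ℝ, 0 ≤ s → s ≤ t → t ≤ (K : ℝ) → ‖Z t ω - Z s ω‖ ≤ C ω * (t - s) ^ a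

/-- The σ-algebra generated by a process (on the time interval `[0,∞)`). -/
def processSigma {α : Type*} [MeasurableSpace α] (X : ℝ → Ω → α) : MeasurableSpace Ω :=
  ⨆ t : Ici (0 : ℝ), MeasurableSpace.comap (X (t : ℝ)) inferInstance

/-- The processes `X` and `Y` are independent. -/
def IndepProcesses {α β : Type*} [MeasurableSpace α] [MeasurableSpace β]
    (P : Measure Ω) (X : ℝ → Ω → α) (Y : ℝ → Ω → β) : Prop :=
  Indep (processSigma X) (processSigma Y) P

/-- `W` is a one-dimensional `(𝓕_t)`-Brownian motion. -/
def IsBrownianMotion (F : Filtration ℝ mΩ) (P : Measure Ω) (W : ℝ → Ω → ℝ) : Prop :=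
  AdaptedProc F W ∧ (∀ ω, W 0 ω = 0) ∧ (∀ ω, Continuous fun t => W t ω) ∧
  ∀ s t : ℝ, 0 ≤ s → s ≤ t →
    Indep (F s) (MeasurableSpace.comap (fun ω => W t ω - W s ω) inferInstance) P ∧
    Measure.map (fun ω => W t ω - W s ω) P = gaussianReal 0 (Real.toNNReal (t - s))

/-- `(W, B)` is a two-dimensional `(𝓕_t)`-Brownian motion. -/
def IsTwoDimBM (F : Filtration ℝ mΩ) (P : Measure Ω) (W B : ℝ → Ω → ℝ) : Prop :=
  IsBrownianMotion F P W ∧ IsBrownianMotion F P B ∧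
  ∀ s t : ℝ, 0 ≤ s → s ≤ t →
    Indep (F s)
      (MeasurableSpace.comap (fun ω => (W t ω - W s ω, B t ω - B s ω)) inferInstance) P ∧
    IndepFun (fun ω => W t ω - W s ω) (fun ω => B t ω - B s ω) P

/-- `W` is an `N`-dimensional `(𝓕_t)`-Brownian motion. -/
def IsMultiBM {N : ℕ} (F : Filtration ℝ mΩ) (P : Measure Ω)
    (W : ℝ → Ω → EuclideanSpace ℝ (Fin N)) : Prop :=
  AdaptedProc F W ∧ (∀ ω, W 0 ω = 0) ∧ (∀ ω, Continuous fun t => W t ω) ∧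
  ∀ s t : ℝ, 0 ≤ s → s ≤ t →
    Indep (F s) (MeasurableSpace.comap (fun ω => W t ω - W s ω) inferInstance) P ∧
    iIndepFun (fun (i : Fin N) ω => W t ω i - W s ω i) P ∧
    ∀ i : Fin N, Measure.map (fun ω => W t ω i - W s ω i) P
      = gaussianReal 0 (Real.toNNReal (t - s))

/-- The covariance function of fractional Brownian motion with Hurst parameter `Hu`. -/
noncomputable def fbmCov (Hu : ℝ) (s t : ℝ) : ℝ :=
  (|s| ^ (2 * Hu) + |t| ^ (2 * Hu) - |t - s| ^ (2 * Hu)) / 2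

/-- `Z` is a fractional Brownian motion with Hurst parameter `Hu`: a centered Gaussian
process with the fBm covariance, with paths Hölder continuous of any exponent `< Hu`. -/
def IsFractionalBM (P : Measure Ω) (Hu : ℝ) (Z : ℝ → Ω → ℝ) : Prop :=
  (∀ t : ℝ, Measurable (Z t)) ∧ (∀ ω, Z 0 ω = 0) ∧ (∀ ω, Continuous fun t => Z t ω) ∧
  (∀ a : ℝ, 0 < a → a < Hu → HolderOnCompacts Z a) ∧
  ∀ (k : ℕ) (c : Fin k → ℝ) (t : Fin k → ℝ), (∀ i, 0 ≤ t i) →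
    Measure.map (fun ω => ∑ i, c i * Z (t i) ω) P =
      gaussianReal 0 (Real.toNNReal (∑ i, ∑ j, c i * c j * fbmCov Hu (t i) (t j)))

/-- `I` is (a version of) the stochastic integral `∫_0^· h s dB_s`: a continuous adapted
local martingale vanishing at `0`, with quadratic variation `∫_0^· h_s^2 ds` and covariation
`⟨I, B⟩ = ∫_0^· h_s ds` (both encoded via the local martingale characterization). -/
def IsStochIntegral (F : Filtration ℝ mΩ) (P : Measure Ω) (h : ℝ → Ω → ℝ)
    (B I : ℝ → Ω → ℝ) : Prop :=
  (∀ ω, I 0 ω = 0) ∧ ContinuousPaths I ∧ AdaptedProc F I ∧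
  IsLocalMartingale F P I ∧
  IsLocalMartingale F P (fun t ω => I t ω ^ 2 - ∫ s in (0:ℝ)..t, (h s ω) ^ 2) ∧
  IsLocalMartingale F P (fun t ω => I t ω * B t ω - ∫ s in (0:ℝ)..t, h s ω)

/-- The filtration stopped at time `T`, i.e. `t ↦ 𝓕_{t ∧ T}`. -/
def stoppedFiltration (F : Filtration ℝ mΩ) (T : ℝ) : Filtration ℝ mΩ where
  seq t := F (min t T)
  mono' := fun _ _ hst => F.mono (min_le_min hst le_rfl)
  le' t := F.le (min t T)

/-- The model `(X_t, 𝓕_t)` is free of simple arbitrage on finite time horizons: for every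
`T > 0` the stopped model `(X_{t ∧ T}, 𝓕_{t ∧ T})` has no simple arbitrage. -/
def NoSimpleArbitrageFiniteHorizons (F : Filtration ℝ mΩ) (P : Measure Ω)
    (X : ℝ → Ω → E) : Prop :=
  ∀ T : ℝ, 0 < T → NoSimpleArbitrage (stoppedFiltration F T) P (fun t ω => X (min t T) ω)

/-- The no obvious arbitrage condition on the time interval `[0,T]`. -/
def NOAUpTo (F : Filtration ℝ mΩ) (P : Measure Ω) (X : ℝ → Ω → E) (T : ℝ) : Prop :=
  ∀ σ : Ω → ℝ, IsStoppingTime F (fun ω => (σ ω : WithTop ℝ)) → (∀ ω, 0 ≤ σ ω ∧ σ ω ≤ T) → 0 < P {ω | σ ω < T} →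
    ∀ H : Ω → E, IsDirection F P (fun ω => ((σ ω : ℝ) : EReal)) H →
      ∀ ε : ℝ, 0 < ε →
        0 < P ({ω | σ ω < T} ∩
          {ω | ∃ δ : ℝ, δ < ε ∧ ∀ t : ℝ, σ ω ≤ t → t ≤ T →
            ⟪H ω, X t ω - X (σ ω) ω⟫ ≤ δ})

/-- `A` is the quadratic variation `⟨M⟩` of the continuous local martingale `M`:
`A` is continuous, increasing, adapted, starts at `0`, and `M² - A` is a local martingale. -/
def IsQuadVariation (F : Filtration ℝ mΩ) (P : Measure Ω) (M A : ℝ → Ω → ℝ) : Prop :=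
  (∀ ω, A 0 ω = 0) ∧ ContinuousPaths A ∧
  (∀ ω, ∀ s t : ℝ, 0 ≤ s → s ≤ t → A s ω ≤ A t ω) ∧
  AdaptedProc F A ∧
  IsLocalMartingale F P (fun t ω => M t ω * M t ω - A t ω)

/-- `A` is the matrix-valued quadratic variation `⟨M⟩` of the `D`-dimensional continuous
local martingale `M`: symmetric, continuous, adapted, `A_0 = 0` and `M^i M^j - A^{ij}` is a
local martingale for all `i, j`. -/
def IsMatrixQuadVariation {D : ℕ} (F : Filtration ℝ mΩ) (P : Measure Ω)
    (M : ℝ → Ω → EuclideanSpace ℝ (Fin D)) (A : ℝ → Ω → Matrix (Fin D) (Fin D) ℝ) : Prop :=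
  (∀ ω, A 0 ω = 0) ∧ (∀ ω i j, Continuous fun t => A t ω i j) ∧
  (∀ ω t, (A t ω).IsSymm) ∧
  (∀ i j : Fin D, AdaptedProc F (fun t ω => A t ω i j)) ∧
  ∀ i j : Fin D, IsLocalMartingale F P (fun t ω => M t ω i * M t ω j - A t ω i j)

/-- `G` is the augmentation (by `P`-null sets) of the natural filtration of `X`. -/
def IsAugmentedNaturalFiltration {β : Type*} [MeasurableSpace β] (P : Measure Ω)
    (X : ℝ → Ω → β) (G : Filtration ℝ mΩ) : Prop :=
  ∀ t : ℝ, (G t : MeasurableSpace Ω) =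
    (⨆ s : {s : ℝ // 0 ≤ s ∧ s ≤ t}, MeasurableSpace.comap (X s.1) inferInstance) ⊔
      MeasurableSpace.generateFrom {N : Set Ω | P N = 0}

section Statement8Proof

open scoped Classical

variable {Ω' : Type*} {mΩ' : MeasurableSpace Ω'} {F : Filtration ℝ mΩ'} {D : ℕ}

/-- Real-valued stopping time. -/
def RST (G : Filtration ℝ mΩ') (σ : Ω' → ℝ) : Prop :=
  ∀ t : ℝ, MeasurableSet[G t] {ω | σ ω ≤ t}

theorem rst_iff {G : Filtration ℝ mΩ'} {σ : Ω' → ℝ} :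
    IsStoppingTime G (fun ω => (σ ω : WithTop ℝ)) ↔ RST G σ := by
  simp only [IsStoppingTime, RST, WithTop.coe_le_coe]

/-- Auxiliary filtration indexed by `ℝ≥0`. -/
def nnFilt (F : Filtration ℝ mΩ') : Filtration ℝ≥0 mΩ' where
  seq t := F t
  mono' := fun s t hst => F.mono (by exact_mod_cast hst)
  le' t := F.le t

theorem meas_stopped {X : ℝ → Ω' → EuclideanSpace ℝ (Fin D)}
    (hAd : ∀ t : ℝ, 0 ≤ t → StronglyMeasurable[F t] (X t))
    (hC : ∀ ω, Continuous fun t => X t ω)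
    {σ : Ω' → ℝ} (hσ : RST F σ) (hσ0 : ∀ ω, 0 ≤ σ ω) {t : ℝ} (ht : 0 ≤ t) :
    Measurable[F t] (fun ω => X (min (σ ω) t) ω) := by
  set u : ℝ≥0 → Ω' → EuclideanSpace ℝ (Fin D) := fun s ω => X s ω with hu
  have hadapted : StronglyAdapted (nnFilt F) u := fun s => hAd s s.2
  have hprog : IsStronglyProgressive (nnFilt F) u :=
    hadapted.isStronglyProgressive_of_continuous (fun ω => (hC ω).comp continuous_subtype_val)
  set τ' : Ω' → ℝ≥0 := fun ω => ⟨min (σ ω) t, le_min (hσ0 ω) ht⟩ with hτ'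
  have hτst : IsStoppingTime (nnFilt F) (fun ω => (τ' ω : WithTop ℝ≥0)) := by
    intro s
    simp only [WithTop.coe_le_coe]
    have : {ω | τ' ω ≤ s} = if (t:ℝ) ≤ s then univ else {ω | σ ω ≤ s} := by
      split_ifs with hts
      · ext ω; simp only [mem_univ, iff_true, mem_setOf_eq]
        show min (σ ω) t ≤ (s : ℝ)
        exact le_trans (min_le_right (σ ω) t) hts
      · push_neg at hts
        ext ω
        simp only [mem_setOf_eq]
        show min (σ ω) t ≤ (s : ℝ) ↔ σ ω ≤ s
        constructor
        · intro h
          rcases min_cases (σ ω) t with ⟨he, _⟩ | ⟨he, hlt⟩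
          · exact le_trans (le_of_eq he.symm) h
          · exact absurd (le_trans (le_of_eq he.symm) h) (not_le.2 hts)
        · intro h
          exact le_trans (min_le_left (σ ω) t) h
    rw [show {ω | τ' ω ≤ s} = {ω | (τ' ω : ℝ≥0) ≤ s} from rfl, this]
    split_ifs
    · exact MeasurableSet.univ
    · exact hσ s
  have := stronglyMeasurable_stoppedValue_of_le hprog hτst (n := ⟨t, ht⟩) (fun ω => by
    exact WithTop.coe_le_coe.2 (show min (σ ω) t ≤ t from min_le_right _ _))
  exact this.measurable

/-- `MAt F σ g`: `g` is measurable at the (real-valued) stopping time `σ`. -/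
def MAt (F : Filtration ℝ mΩ') (σ : Ω' → ℝ) {α : Type*} [MeasurableSpace α] (g : Ω' → α) : Prop :=
  MeasurableAtTime F (fun ω => ((σ ω : ℝ) : EReal)) g

theorem setOf_coe_le {σ : Ω' → ℝ} {t : ℝ} :
    {ω | ((σ ω : ℝ) : EReal) ≤ (t : EReal)} = {ω | σ ω ≤ t} := by
  ext ω; simp [EReal.coe_le_coe_iff]

theorem mAt_iff' {α : Type*} [MeasurableSpace α] {σ : Ω' → ℝ} {g : Ω' → α} :
    MAt F σ g ↔ ∀ B : Set α, MeasurableSet B → ∀ t : ℝ,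
      MeasurableSet[F t] (g ⁻¹' B ∩ {ω | σ ω ≤ t}) := by
  unfold MAt MeasurableAtTime
  constructor <;> intro h B hB t <;> [rw [← setOf_coe_le (σ := σ) (t := t)]; rw [setOf_coe_le]] <;>
    exact h B hB t

theorem mAt_of_agrees {α : Type*} [MeasurableSpace α] {σ : Ω' → ℝ}
    (hσ : RST F σ) {g : Ω' → α}
    (h : ∀ t : ℝ, ∃ G : Ω' → α, Measurable[F t] G ∧ ∀ ω, σ ω ≤ t → g ω = G ω) :
    MAt F σ g := by
  rw [mAt_iff']
  intro B hB t
  obtain ⟨G, hG, hag⟩ := h t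
  have : g ⁻¹' B ∩ {ω | σ ω ≤ t} = G ⁻¹' B ∩ {ω | σ ω ≤ t} := by
    ext ω
    simp only [mem_inter_iff, mem_preimage, mem_setOf_eq]
    constructor
    · rintro ⟨h1, h2⟩; exact ⟨(hag ω h2) ▸ h1, h2⟩
    · rintro ⟨h1, h2⟩; exact ⟨(hag ω h2).symm ▸ h1, h2⟩
  rw [this]
  exact (hG hB).inter (hσ t)

theorem mAt_elim {α : Type*} [MeasurableSpace α] {σ : Ω' → ℝ} {g : Ω' → α} (c : α)
    (hσ : RST F σ) (h : MAt F σ g) (t : ℝ) :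
    Measurable[F t] (fun ω => if σ ω ≤ t then g ω else c) := by
  rw [mAt_iff'] at h
  refine fun B hB => ?_
  show MeasurableSet[F t] _
  have : (fun ω => if σ ω ≤ t then g ω else c) ⁻¹' B =
      (g ⁻¹' B ∩ {ω | σ ω ≤ t}) ∪ (if c ∈ B then {ω | σ ω ≤ t}ᶜ else ∅) := by
    ext ω
    by_cases hc : c ∈ B <;> by_cases hst : σ ω ≤ t <;>
      simp [hst, hc, mem_preimage]
  rw [this]
  rcases em (c ∈ B) with hc | hc
  · rw [if_pos hc]; exact MeasurableSet.union (h B hB t) (MeasurableSet.compl (hσ t))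
  · rw [if_neg hc]; exact MeasurableSet.union (h B hB t) (@MeasurableSet.empty _ (F t))

theorem mAt_measurable {α : Type*} [MeasurableSpace α] {σ : Ω' → ℝ} {g : Ω' → α}
    (h : MAt F σ g) : Measurable[mΩ'] g := by
  rw [mAt_iff'] at h
  intro B hB
  have : g ⁻¹' B = ⋃ n : ℕ, (g ⁻¹' B ∩ {ω | σ ω ≤ n}) := by
    ext ω
    simp only [mem_iUnion, mem_inter_iff, mem_preimage, mem_setOf_eq]
    constructor
    · intro hω
      obtain ⟨n, hn⟩ := exists_nat_ge (σ ω)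
      exact ⟨n, hω, hn⟩
    · rintro ⟨n, hn, _⟩; exact hn
  rw [this]
  exact MeasurableSet.iUnion fun n => F.le n _ (h B hB n)

theorem mAt_mono {α : Type*} [MeasurableSpace α] {σ σ' : Ω' → ℝ} {g : Ω' → α}
    (hσ' : RST F σ') (hle : ∀ ω, σ ω ≤ σ' ω) (h : MAt F σ g) : MAt F σ' g := by
  rw [mAt_iff'] at h ⊢
  intro B hB t
  have : g ⁻¹' B ∩ {ω | σ' ω ≤ t} = (g ⁻¹' B ∩ {ω | σ ω ≤ t}) ∩ {ω | σ' ω ≤ t} := by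
    ext ω
    simp only [mem_inter_iff, mem_preimage, mem_setOf_eq]
    exact ⟨fun ⟨h1, h2⟩ => ⟨⟨h1, le_trans (hle ω) h2⟩, h2⟩, fun ⟨⟨h1, _⟩, h2⟩ => ⟨h1, h2⟩⟩
  rw [this]
  exact (h B hB t).inter (hσ' t)

theorem mAt_const {α : Type*} [MeasurableSpace α] {σ : Ω' → ℝ} (hσ : RST F σ)
    (c : α) : MAt F σ (fun _ => c) :=
  mAt_of_agrees hσ (fun _ => ⟨fun _ => c, measurable_const, fun _ _ => rfl⟩)

theorem mAt_stoppedValue {X : ℝ → Ω' → EuclideanSpace ℝ (Fin D)}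
    (hAd : ∀ t : ℝ, 0 ≤ t → StronglyMeasurable[F t] (X t))
    (hC : ∀ ω, Continuous fun t => X t ω)
    {σ : Ω' → ℝ} (hσ : RST F σ) (hσ0 : ∀ ω, 0 ≤ σ ω) :
    MAt F σ (fun ω => X (σ ω) ω) := by
  refine mAt_of_agrees hσ (fun t => ?_)
  rcases le_or_gt 0 t with ht | ht
  · exact ⟨fun ω => X (min (σ ω) t) ω, meas_stopped hAd hC hσ hσ0 ht,
      fun ω hωt => by show X (σ ω) ω = X (min (σ ω) t) ω; rw [min_eq_left hωt]⟩
  · exact ⟨fun _ => 0, measurable_const,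
      fun ω hωt => absurd (lt_of_le_of_lt hωt ht) (not_lt.2 (hσ0 ω))⟩

/-! ### EReal infimum helpers -/

theorem einf_le {S : Set ℝ} {s : ℝ} (h : s ∈ S) :
    sInf ((fun u : ℝ => (u : EReal)) '' S) ≤ (s : EReal) :=
  sInf_le ⟨s, h, rfl⟩

theorem le_einf {S : Set ℝ} {c : ℝ} (h : ∀ s ∈ S, c ≤ s) :
    (c : EReal) ≤ sInf ((fun u : ℝ => (u : EReal)) '' S) := by
  refine le_sInf ?_
  rintro u ⟨s, hs, rfl⟩
  exact EReal.coe_le_coe_iff.2 (h s hs)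

theorem einf_lt {S : Set ℝ} {c : ℝ} (h : sInf ((fun u : ℝ => (u : EReal)) '' S) < (c : EReal)) :
    ∃ s ∈ S, s < c := by
  obtain ⟨u, ⟨s, hs, rfl⟩, hu⟩ := sInf_lt_iff.1 h
  exact ⟨s, hs, EReal.coe_lt_coe_iff.1 hu⟩

theorem einf_ne_bot {S : Set ℝ} {a : ℝ} (hlb : ∀ s ∈ S, a ≤ s) :
    sInf ((fun u : ℝ => (u : EReal)) '' S) ≠ ⊥ :=
  fun h => absurd (h ▸ le_einf hlb) (by simp)

theorem einf_ne_top {S : Set ℝ} {c : ℝ}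
    (hfin : sInf ((fun u : ℝ => (u : EReal)) '' S) ≤ (c : EReal)) :
    sInf ((fun u : ℝ => (u : EReal)) '' S) ≠ ⊤ :=
  fun h => absurd (h ▸ hfin) (by simp)

theorem einf_coe_toReal {S : Set ℝ} {a c : ℝ} (hlb : ∀ s ∈ S, a ≤ s)
    (hfin : sInf ((fun u : ℝ => (u : EReal)) '' S) ≤ (c : EReal)) :
    (((sInf ((fun u : ℝ => (u : EReal)) '' S)).toReal : ℝ) : EReal)
      = sInf ((fun u : ℝ => (u : EReal)) '' S) :=
  EReal.coe_toReal (einf_ne_top hfin) (einf_ne_bot hlb)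

theorem ge_at_einf {Zf : ℝ → ℝ} (hc : Continuous Zf) {S : Set ℝ} {a c θ : ℝ}
    (hlb : ∀ s ∈ S, a ≤ s) (hfin : sInf ((fun u : ℝ => (u : EReal)) '' S) ≤ (c : EReal))
    (hv : ∀ s ∈ S, θ ≤ Zf s) :
    θ ≤ Zf (sInf ((fun u : ℝ => (u : EReal)) '' S)).toReal := by
  set b := sInf ((fun u : ℝ => (u : EReal)) '' S) with hb
  set bR := b.toReal with hbR
  have hcoe : ((bR : ℝ) : EReal) = b := einf_coe_toReal hlb hfin
  have hex : ∀ n : ℕ, ∃ s : ℝ, s ∈ S ∧ bR ≤ s ∧ s < bR + 1 / ((n:ℝ) + 1) := by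
    intro n
    have hpos : (0:ℝ) < 1 / ((n:ℝ) + 1) := by positivity
    have h1 : b < ((bR + 1 / ((n:ℝ) + 1) : ℝ) : EReal) := by
      rw [← hcoe]
      exact EReal.coe_lt_coe_iff.2 (by linarith)
    obtain ⟨s, hs, hslt⟩ := einf_lt h1
    refine ⟨s, hs, ?_, hslt⟩
    have h2 := einf_le hs
    rw [← hb, ← hcoe] at h2
    exact EReal.coe_le_coe_iff.1 h2
  choose u hu1 hu2 hu3 using hex
  have hlim : Filter.Tendsto u Filter.atTop (nhds bR) := by
    have h0 : Filter.Tendsto (fun n : ℕ => bR + 1 / ((n : ℝ) + 1)) Filter.atTop (nhds (bR + 0)) :=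
      Filter.Tendsto.add tendsto_const_nhds tendsto_one_div_add_atTop_nhds_zero_nat
    rw [add_zero] at h0
    exact tendsto_of_tendsto_of_tendsto_of_le_of_le tendsto_const_nhds h0 hu2 (fun n => le_of_lt (hu3 n))
  have : Filter.Tendsto (fun n => Zf (u n)) Filter.atTop (nhds (Zf bR)) :=
    ((hc.tendsto bR).comp hlim)
  exact le_of_tendsto_of_tendsto' tendsto_const_nhds this (fun n => hv _ (hu1 n))

theorem le_at_einf {Zf : ℝ → ℝ} (hc : Continuous Zf) {S : Set ℝ} {a c θ : ℝ}
    (hlb : ∀ s ∈ S, a ≤ s) (hfin : sInf ((fun u : ℝ => (u : EReal)) '' S) ≤ (c : EReal))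
    (hv : ∀ s ∈ S, Zf s ≤ θ) :
    Zf (sInf ((fun u : ℝ => (u : EReal)) '' S)).toReal ≤ θ := by
  have := ge_at_einf (hc.neg) hlb hfin (fun s hs => neg_le_neg (hv s hs))
  simpa using this

theorem ge_at_left {Zf : ℝ → ℝ} (hc : Continuous Zf) {a b θ : ℝ} (hab : a ≤ b)
    (h0 : θ ≤ Zf a) (h : ∀ t, a ≤ t → t < b → θ ≤ Zf t) : θ ≤ Zf b := by
  rcases eq_or_lt_of_le hab with rfl | hab
  · exact h0
  · set u : ℕ → ℝ := fun n => b - (b - a) / (n + 1) with hu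
    have hmem : ∀ n : ℕ, a ≤ u n ∧ u n < b := by
      intro n
      constructor
      · have h1 : (b - a) / ((n:ℝ) + 1) ≤ b - a :=
          div_le_self (by linarith) (by norm_num)
        simp only [hu]; linarith
      · have h2 : 0 < (b - a) / ((n:ℝ) + 1) := div_pos (by linarith) (by positivity)
        simp only [hu]; linarith
    have hlim : Filter.Tendsto u Filter.atTop (nhds b) := by
      have h0' : Filter.Tendsto (fun n : ℕ => (b - a) * (1 / ((n:ℝ) + 1))) Filter.atTop
          (nhds ((b - a) * 0)) :=
        Filter.Tendsto.mul tendsto_const_nhds tendsto_one_div_add_atTop_nhds_zero_nat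
      rw [mul_zero] at h0'
      have : Filter.Tendsto (fun n : ℕ => b - (b - a) * (1 / ((n:ℝ) + 1))) Filter.atTop
          (nhds (b - 0)) := Filter.Tendsto.sub tendsto_const_nhds h0'
      rw [sub_zero] at this
      convert this using 2 with n
      simp only [hu]; ring
    have : Filter.Tendsto (fun n => Zf (u n)) Filter.atTop (nhds (Zf b)) :=
      (hc.tendsto b).comp hlim
    exact le_of_tendsto_of_tendsto' tendsto_const_nhds this
      (fun n => h (u n) (hmem n).1 (hmem n).2)

theorem le_at_left {Zf : ℝ → ℝ} (hc : Continuous Zf) {a b θ : ℝ} (hab : a ≤ b)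
    (h0 : Zf a ≤ θ) (h : ∀ t, a ≤ t → t < b → Zf t ≤ θ) : Zf b ≤ θ := by
  have := ge_at_left hc.neg hab (neg_le_neg h0) (fun t h1 h2 => neg_le_neg (h t h1 h2))
  simpa using this

/-! ### Hitting times after a stopping time -/

/-- `ehit A Z O ω`: first time `t ≥ A ω` with `Z t ω ∈ O`, as an extended real. -/
noncomputable def ehit (A : Ω' → ℝ) (Z : ℝ → Ω' → ℝ) (O : Set ℝ) (ω : Ω') : EReal :=
  sInf ((fun u : ℝ => (u : EReal)) '' {s : ℝ | A ω ≤ s ∧ Z s ω ∈ O})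

/-- Capping an extended-real random time at `T`. -/
noncomputable def ecap (b : Ω' → EReal) (T : ℝ) (ω : Ω') : ℝ :=
  if b ω ≤ (T : EReal) then (b ω).toReal else T

theorem ehit_lb {A : Ω' → ℝ} {Z : ℝ → Ω' → ℝ} {O : Set ℝ} (ω : Ω') :
    ((A ω : ℝ) : EReal) ≤ ehit A Z O ω :=
  le_einf (fun _ hs => hs.1)

theorem ehit_le {A : Ω' → ℝ} {Z : ℝ → Ω' → ℝ} {O : Set ℝ} {ω : Ω'} {s : ℝ}
    (h1 : A ω ≤ s) (h2 : Z s ω ∈ O) : ehit A Z O ω ≤ (s : EReal) :=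
  einf_le ⟨h1, h2⟩

theorem ehit_mono {A A' : Ω' → ℝ} {Z : ℝ → Ω' → ℝ} {O : Set ℝ} {ω : Ω'}
    (h : A ω ≤ A' ω) : ehit A Z O ω ≤ ehit A' Z O ω :=
  sInf_le_sInf (image_mono (fun s hs => ⟨le_trans h hs.1, hs.2⟩))

theorem ehit_lt_meas {A : Ω' → ℝ} (hA : RST F A) (hA0 : ∀ ω, 0 ≤ A ω)
    {Z : ℝ → Ω' → ℝ} (hZc : ∀ ω, Continuous fun s => Z s ω)
    (hZm : ∀ q : ℝ, 0 ≤ q → ∃ W : Ω' → ℝ, Measurable[F q] W ∧ ∀ ω, A ω ≤ q → W ω = Z q ω)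
    {O : Set ℝ} (hO : IsOpen O) (t : ℝ) :
    MeasurableSet[F t] {ω | ehit A Z O ω < (t : EReal)} := by
  have hset : {ω | ehit A Z O ω < (t : EReal)} = ⋃ q : ℚ,
      (if 0 ≤ (q:ℝ) ∧ (q:ℝ) < t then {ω | A ω ≤ (q:ℝ) ∧ Z q ω ∈ O} else ∅) := by
    ext ω
    simp only [mem_setOf_eq, mem_iUnion]
    constructor
    · intro hω
      obtain ⟨s, hs, hst⟩ := einf_lt hω
      have hsnh : (fun u => Z u ω) ⁻¹' O ∈ nhds s :=
        (hO.preimage (hZc ω)).mem_nhds hs.2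
      obtain ⟨δ, hδ, hball⟩ := Metric.mem_nhds_iff.1 hsnh
      obtain ⟨q, hq1, hq2⟩ := exists_rat_btwn (lt_min hst (by linarith : s < s + δ))
      rw [lt_min_iff] at hq2
      refine ⟨q, ?_⟩
      rw [if_pos ⟨le_trans (le_trans (hA0 ω) hs.1) (le_of_lt hq1), hq2.1⟩]
      refine ⟨le_trans hs.1 (le_of_lt hq1), ?_⟩
      have : (q:ℝ) ∈ Metric.ball s δ := by
        rw [Metric.mem_ball, Real.dist_eq, abs_lt]
        constructor <;> [linarith [hq2.2]; linarith [hq2.2]]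
      exact hball this
    · rintro ⟨q, hq⟩
      by_cases hcond : 0 ≤ (q:ℝ) ∧ (q:ℝ) < t
      · rw [if_pos hcond] at hq
        exact lt_of_le_of_lt (ehit_le hq.1 hq.2) (EReal.coe_lt_coe_iff.2 hcond.2)
      · rw [if_neg hcond] at hq
        exact absurd hq (notMem_empty ω)
  rw [hset]
  refine MeasurableSet.iUnion (fun q => ?_)
  by_cases hcond : 0 ≤ (q:ℝ) ∧ (q:ℝ) < t
  · rw [if_pos hcond]
    obtain ⟨W, hW, hWa⟩ := hZm q hcond.1
    have : {ω | A ω ≤ (q:ℝ) ∧ Z q ω ∈ O} = {ω | A ω ≤ (q:ℝ)} ∩ W ⁻¹' O := by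
      ext ω
      simp only [mem_setOf_eq, mem_inter_iff, mem_preimage]
      exact ⟨fun ⟨h1, h2⟩ => ⟨h1, (hWa ω h1) ▸ h2⟩, fun ⟨h1, h2⟩ => ⟨h1, (hWa ω h1).symm ▸ h2⟩⟩
    rw [this]
    exact F.mono (le_of_lt hcond.2) _ ((hA q).inter (hW hO.measurableSet))
  · rw [if_neg hcond]
    exact @MeasurableSet.empty _ (F t)

theorem ehit_le_meas (hUCr : ∀ t : ℝ, (F t : MeasurableSpace Ω') = ⨅ s : Ioi t, F (s : ℝ))
    {A : Ω' → ℝ} (hA : RST F A) (hA0 : ∀ ω, 0 ≤ A ω)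
    {Z : ℝ → Ω' → ℝ} (hZc : ∀ ω, Continuous fun s => Z s ω)
    (hZm : ∀ q : ℝ, 0 ≤ q → ∃ W : Ω' → ℝ, Measurable[F q] W ∧ ∀ ω, A ω ≤ q → W ω = Z q ω)
    {O : Set ℝ} (hO : IsOpen O) (t : ℝ) :
    MeasurableSet[F t] {ω | ehit A Z O ω ≤ (t : EReal)} := by
  have hmain : ∀ s : ℝ, t < s → MeasurableSet[F s] {ω | ehit A Z O ω ≤ (t : EReal)} := by
    intro s hs
    have hset : {ω | ehit A Z O ω ≤ (t : EReal)} =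
        ⋂ n : ℕ, {ω | ehit A Z O ω < ((t + (s - t) / ((n:ℝ) + 1) : ℝ) : EReal)} := by
      ext ω
      simp only [mem_setOf_eq, mem_iInter]
      constructor
      · intro h n
        refine lt_of_le_of_lt h (EReal.coe_lt_coe_iff.2 ?_)
        have : 0 < (s - t) / ((n:ℝ) + 1) := div_pos (by linarith) (by positivity)
        linarith
      · intro h
        have hgen : ∀ b : EReal,
            (∀ n : ℕ, b < ((t + (s - t) / ((n:ℝ) + 1) : ℝ) : EReal)) → b ≤ (t : EReal) := by
          intro b hball
          induction b using EReal.rec with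
          | bot => exact bot_le
          | top => exact absurd (hball 0) (not_top_lt)
          | coe x =>
            refine EReal.coe_le_coe_iff.2 ?_
            by_contra hx
            push_neg at hx
            obtain ⟨n, hn⟩ := exists_nat_gt ((s - t) / (x - t))
            have hx1 : (s - t) / ((n:ℝ) + 1) < x - t := by
              rw [div_lt_iff₀ (by positivity)]
              have h2 : (s - t) / (x - t) < (n:ℝ) + 1 := by linarith
              rw [div_lt_iff₀ (by linarith)] at h2
              linarith
            have := EReal.coe_lt_coe_iff.1 (hball n)
            linarith
        exact hgen _ h
    rw [hset]
    refine MeasurableSet.iInter (fun n => ?_)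
    have hle : t + (s - t) / ((n:ℝ) + 1) ≤ s := by
      have : (s - t) / ((n:ℝ) + 1) ≤ (s - t) / 1 :=
        div_le_div_of_nonneg_left (by linarith) (by norm_num) (by norm_num)
      simp only [div_one] at this
      linarith
    exact F.mono hle _ (ehit_lt_meas hA hA0 hZc hZm hO _)
  rw [hUCr t]
  rw [MeasurableSpace.measurableSet_iInf]
  rintro ⟨s, hs⟩
  exact hmain s hs

/-! ### Capped times -/

theorem ecap_le_of_nonneg {b : Ω' → EReal} (hb0 : ∀ ω, (0:EReal) ≤ b ω) {T : ℝ} (hT : 0 ≤ T)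
    (ω : Ω') : ecap b T ω ≤ T := by
  unfold ecap
  split_ifs with h
  · have h1 : (b ω).toReal ≤ ((T : EReal)).toReal :=
      EReal.toReal_le_toReal h
        (fun hbot => by have := hb0 ω; rw [hbot] at this; simp at this) (by simp)
    rwa [EReal.toReal_coe] at h1
  · exact le_refl T

theorem le_ecap {b : Ω' → EReal} {T a : ℝ} {ω : Ω'} (hab : (a : EReal) ≤ b ω) (haT : a ≤ T) :
    a ≤ ecap b T ω := by
  unfold ecap
  split_ifs with h
  · have h1 : ((a:ℝ):EReal).toReal ≤ (b ω).toReal :=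
      EReal.toReal_le_toReal hab (by simp) (fun htop => by rw [htop] at h; simp at h)
    rwa [EReal.toReal_coe] at h1
  · exact haT

theorem ecap_coe {b : Ω' → EReal} {T a : ℝ} {ω : Ω'} (hab : (a : EReal) ≤ b ω)
    (h : b ω ≤ (T : EReal)) : ((ecap b T ω : ℝ) : EReal) = b ω := by
  unfold ecap
  rw [if_pos h]
  exact EReal.coe_toReal (fun htop => by rw [htop] at h; simp at h)
    (fun hbot => by rw [hbot] at hab; simp at hab)

theorem ecap_stopping {b : Ω' → EReal}
    (hble : ∀ t : ℝ, MeasurableSet[F t] {ω | b ω ≤ (t : EReal)})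
    (hb0 : ∀ ω, (0 : EReal) ≤ b ω) {T : ℝ} (hT : 0 ≤ T) :
    RST F (ecap b T) := by
  intro t
  rcases le_or_gt T t with hTt | hTt
  · have : {ω | ecap b T ω ≤ t} = univ := by
      ext ω
      simp only [mem_setOf_eq, mem_univ, iff_true]
      exact le_trans (ecap_le_of_nonneg hb0 hT ω) hTt
    rw [this]; exact MeasurableSet.univ
  · have : {ω | ecap b T ω ≤ t} = {ω | b ω ≤ (t : EReal)} := by
      ext ω
      simp only [mem_setOf_eq]
      constructor
      · intro h
        by_cases hb : b ω ≤ (T : EReal)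
        · have := ecap_coe (a := 0) (by exact_mod_cast hb0 ω) hb
          rw [← this]
          exact EReal.coe_le_coe_iff.2 h
        · exfalso
          unfold ecap at h
          rw [if_neg hb] at h
          linarith
      · intro h
        have hbT : b ω ≤ (T : EReal) := le_trans h (EReal.coe_le_coe_iff.2 (le_of_lt hTt))
        have hcoe := ecap_coe (a := 0) (by exact_mod_cast hb0 ω) hbT
        have : ((ecap b T ω : ℝ) : EReal) ≤ (t : EReal) := hcoe ▸ h
        exact EReal.coe_le_coe_iff.1 this
    rw [this]; exact hble t

theorem ehit_lt_stop_meas {b : Ω' → EReal}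
    (hble : ∀ t : ℝ, MeasurableSet[F t] {ω | b ω ≤ (t : EReal)})
    {τ : Ω' → ℝ} (hτ : RST F τ) (hb0 : ∀ ω, (0 : EReal) ≤ b ω) (t : ℝ) :
    MeasurableSet[F t] ({ω | b ω < (τ ω : EReal)} ∩ {ω | b ω ≤ (t : EReal)}) := by
  have hset : {ω | b ω < (τ ω : EReal)} ∩ {ω | b ω ≤ (t : EReal)} =
      (⋃ q : ℚ, if (q:ℝ) ≤ t then ({ω | b ω ≤ ((q:ℝ) : EReal)} ∩ {ω | τ ω ≤ (q:ℝ)}ᶜ) else ∅) ∪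
        ({ω | b ω ≤ (t : EReal)} ∩ {ω | τ ω ≤ t}ᶜ) := by
    ext ω
    simp only [mem_inter_iff, mem_setOf_eq, mem_union, mem_iUnion, mem_compl_iff]
    constructor
    · rintro ⟨h1, h2⟩
      rcases le_or_gt (τ ω) t with hτt | hτt
      · left
        have hne_bot : b ω ≠ ⊥ := fun hbot => by
          have := hb0 ω; rw [hbot] at this; simp at this
        have hne_top : b ω ≠ ⊤ := fun htop => by rw [htop] at h2; simp at h2
        have hcoe : (((b ω).toReal : ℝ) : EReal) = b ω := EReal.coe_toReal hne_top hne_bot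
        have hlt : (b ω).toReal < τ ω := by
          rw [← hcoe] at h1; exact EReal.coe_lt_coe_iff.1 h1
        obtain ⟨q, hq1, hq2⟩ := exists_rat_btwn hlt
        refine ⟨q, ?_⟩
        rw [if_pos (le_trans (le_of_lt hq2) hτt)]
        refine ⟨?_, ?_⟩
        · show b ω ≤ (((q:ℝ) : ℝ) : EReal)
          rw [← hcoe]; exact EReal.coe_le_coe_iff.2 (le_of_lt hq1)
        · simp only [mem_compl_iff, mem_setOf_eq]; exact not_le.2 hq2
      · right; exact ⟨h2, not_le.2 hτt⟩
    · rintro (⟨q, hq⟩ | ⟨h1, h2⟩)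
      · by_cases hcond : (q:ℝ) ≤ t
        · rw [if_pos hcond] at hq
          obtain ⟨hq1, hq2⟩ := hq
          simp only [mem_compl_iff, mem_setOf_eq] at hq1 hq2
          rw [not_le] at hq2
          exact ⟨lt_of_le_of_lt hq1 (EReal.coe_lt_coe_iff.2 hq2),
            le_trans hq1 (EReal.coe_le_coe_iff.2 hcond)⟩
        · rw [if_neg hcond] at hq
          exact absurd hq (notMem_empty ω)
      · rw [not_le] at h2
        exact ⟨lt_of_le_of_lt h1 (EReal.coe_lt_coe_iff.2 h2), h1⟩
  rw [hset]
  refine MeasurableSet.union (MeasurableSet.iUnion fun q => ?_)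
    (MeasurableSet.inter (hble t) (MeasurableSet.compl (hτ t)))
  by_cases hcond : (q:ℝ) ≤ t
  · rw [if_pos hcond]
    exact F.mono hcond _ (MeasurableSet.inter (hble q) (MeasurableSet.compl (hτ q)))
  · rw [if_neg hcond]
    exact @MeasurableSet.empty _ (F t)

/-! ### The gain process and pair strategies -/

/-- The gain process in direction `H` started at `σ`. -/
noncomputable def Zproc (X : ℝ → Ω' → EuclideanSpace ℝ (Fin D)) (σ : Ω' → ℝ)
    (H : Ω' → EuclideanSpace ℝ (Fin D)) (t : ℝ) (ω : Ω') : ℝ :=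
  ⟪H ω, X t ω - X (σ ω) ω⟫

theorem Zproc_cont {X : ℝ → Ω' → EuclideanSpace ℝ (Fin D)} (hC : ContinuousPaths X)
    (σ : Ω' → ℝ) (H : Ω' → EuclideanSpace ℝ (Fin D)) (ω : Ω') :
    Continuous fun t => Zproc X σ H t ω :=
  Continuous.inner continuous_const ((hC ω).sub continuous_const)

theorem Zproc_self {X : ℝ → Ω' → EuclideanSpace ℝ (Fin D)} (σ : Ω' → ℝ)
    (H : Ω' → EuclideanSpace ℝ (Fin D)) (ω : Ω') : Zproc X σ H (σ ω) ω = 0 := by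
  unfold Zproc; rw [sub_self, inner_zero_right]

theorem Zproc_sub {X : ℝ → Ω' → EuclideanSpace ℝ (Fin D)} (σ : Ω' → ℝ)
    (H : Ω' → EuclideanSpace ℝ (Fin D)) (s t : ℝ) (ω : Ω') :
    Zproc X σ H t ω - Zproc X σ H s ω = ⟪H ω, X t ω - X s ω⟫ := by
  unfold Zproc
  rw [← inner_sub_right]
  congr 1
  abel

theorem Zproc_guard {X : ℝ → Ω' → EuclideanSpace ℝ (Fin D)} (hAd : AdaptedProc F X)
    (hC : ContinuousPaths X) {σ : Ω' → ℝ} {H : Ω' → EuclideanSpace ℝ (Fin D)}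
    (hσ : RST F σ) (hσ0 : ∀ ω, 0 ≤ σ ω) (hH : MAt F σ H)
    {q : ℝ} (hq : 0 ≤ q) :
    ∃ W : Ω' → ℝ, Measurable[F q] W ∧ ∀ ω, σ ω ≤ q → W ω = Zproc X σ H q ω := by
  refine ⟨fun ω => ⟪(if σ ω ≤ q then H ω else 0), X q ω - X (min (σ ω) q) ω⟫, ?_, ?_⟩
  · exact Measurable.inner (mAt_elim 0 hσ hH q)
      (((hAd q hq).measurable).sub (meas_stopped (fun t ht => hAd t ht) hC hσ hσ0 hq))
  · intro ω hωq
    show (inner ℝ (if σ ω ≤ q then H ω else 0) (X q ω - X (min (σ ω) q) ω) : ℝ) = _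
    rw [if_pos hωq, min_eq_left hωq]
    rfl

theorem hittingAfter_eq {X : ℝ → Ω' → EuclideanSpace ℝ (Fin D)} (σ : Ω' → ℝ)
    (H : Ω' → EuclideanSpace ℝ (Fin D)) (ω : Ω') :
    hittingAfter X (fun ω' => ((σ ω' : ℝ) : EReal)) H ω
      = ehit σ (Zproc X σ H) {x : ℝ | 0 < x} ω := by
  unfold hittingAfter ehit Zproc
  congr 1
  ext u
  simp only [mem_image, mem_setOf_eq, EReal.coe_le_coe_iff, EReal.toReal_coe]
  constructor
  · rintro ⟨t, rfl, h1, h2⟩; exact ⟨t, ⟨h1, h2⟩, rfl⟩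
  · rintro ⟨t, ⟨h1, h2⟩, rfl⟩; exact ⟨t, rfl, h1, h2⟩

theorem ehit_neg_eq {X : ℝ → Ω' → EuclideanSpace ℝ (Fin D)} (σ : Ω' → ℝ)
    (H : Ω' → EuclideanSpace ℝ (Fin D)) (ω : Ω') :
    ehit σ (Zproc X σ (fun ω' => -H ω')) {x : ℝ | 0 < x} ω
      = ehit σ (Zproc X σ H) {x : ℝ | x < 0} ω := by
  have hseteq : {s : ℝ | σ ω ≤ s ∧ Zproc X σ (fun ω' => -H ω') s ω ∈ {x : ℝ | 0 < x}}
      = {s : ℝ | σ ω ≤ s ∧ Zproc X σ H s ω ∈ {x : ℝ | x < 0}} := by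
    ext s
    simp only [mem_setOf_eq, Zproc, inner_neg_left]
    constructor
    · rintro ⟨h1, h2⟩; exact ⟨h1, by linarith⟩
    · rintro ⟨h1, h2⟩; exact ⟨h1, by linarith⟩
  unfold ehit
  rw [hseteq]

theorem stopped_stopping {ρ : Ω' → ℝ} (hρ : RST F ρ) {T : ℝ} (hρT : ∀ ω, ρ ω ≤ T) :
    RST (stoppedFiltration F T) ρ := by
  intro t
  show MeasurableSet[F (min t T)] {ω | ρ ω ≤ t}
  rcases le_or_gt t T with h | h
  · rw [min_eq_left h]; exact hρ t
  · rw [min_eq_right (le_of_lt h)]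
    have : {ω | ρ ω ≤ t} = univ := eq_univ_of_forall fun ω => le_trans (hρT ω) (le_of_lt h)
    rw [this]; exact MeasurableSet.univ

theorem mAt_const_filtration {F' : Filtration ℝ mΩ'} {α : Type*} [MeasurableSpace α]
    (ρc : ℝ) (c : α) :
    MeasurableAtTime F' (fun _ => ((ρc : ℝ) : EReal)) (fun _ => c) := by
  intro B hB t
  have : ((fun _ : Ω' => c) ⁻¹' B ∩ {_ω : Ω' | ((ρc : ℝ) : EReal) ≤ (t : EReal)}) =
      if c ∈ B ∧ ((ρc : ℝ) : EReal) ≤ (t : EReal) then univ else ∅ := by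
    split_ifs with h
    · ext ω; simp [h.1, h.2]
    · ext ω
      simp only [mem_inter_iff, mem_preimage, mem_setOf_eq, mem_empty_iff_false, iff_false]
      exact fun hx => h ⟨hx.1, hx.2⟩
  rw [this]
  split_ifs
  exacts [MeasurableSet.univ, @MeasurableSet.empty _ (F' t)]

theorem mAt_stoppedFiltration {σ : Ω' → ℝ} {α : Type*} [MeasurableSpace α] {g : Ω' → α} {T : ℝ}
    (hσT : ∀ ω, σ ω ≤ T) (h : MAt F σ g) :
    MeasurableAtTime (stoppedFiltration F T) (fun ω => ((σ ω : ℝ) : EReal)) g := by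
  intro B hB t
  show MeasurableSet[F (min t T)] _
  rw [show {ω | ((σ ω : ℝ) : EReal) ≤ (t : EReal)} = {ω | σ ω ≤ t} from setOf_coe_le]
  rcases le_or_gt t T with hle | hlt
  · rw [min_eq_left hle]; exact mAt_iff'.1 h B hB t
  · rw [min_eq_right (le_of_lt hlt)]
    have : g ⁻¹' B ∩ {ω | σ ω ≤ t} = g ⁻¹' B ∩ {ω | σ ω ≤ T} := by
      ext ω; simp only [mem_inter_iff, mem_setOf_eq]
      exact ⟨fun hx => ⟨hx.1, hσT ω⟩, fun hx => ⟨hx.1, le_trans hx.2 (le_of_lt hlt)⟩⟩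
    rw [this]; exact mAt_iff'.1 h B hB T

/-- From no simple arbitrage on finite horizons: no "buy `H` at `σ`, sell at `τ`" strategy
with bounded stopping times can be an arbitrage. -/
theorem pair_strategy {X : ℝ → Ω' → EuclideanSpace ℝ (Fin D)} {P : Measure Ω'}
    (hNA : NoSimpleArbitrageFiniteHorizons F P X) {T : ℝ} (hT : 0 < T)
    {σ τ : Ω' → ℝ} {H : Ω' → EuclideanSpace ℝ (Fin D)}
    (hσ : RST F σ) (hτ : RST F τ)
    (hσ0 : ∀ ω, 0 ≤ σ ω) (hστ : ∀ ω, σ ω ≤ τ ω) (hσT : ∀ ω, σ ω ≤ T) (hτT : ∀ ω, τ ω ≤ T)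
    (hH : MAt F σ H)
    (hpos : ∀ᵐ ω ∂P, 0 ≤ ⟪H ω, X (τ ω) ω - X (σ ω) ω⟫) :
    ¬ 0 < P {ω | 0 < ⟪H ω, X (τ ω) ω - X (σ ω) ω⟫} := by
  intro hp
  set tf : ℕ → Ω' → ℝ := fun j ω => if j = 0 then 0 else if j = 1 then σ ω else τ ω with htf
  set pf : ℕ → Ω' → EuclideanSpace ℝ (Fin D) :=
    fun j ω => if j = 1 then H ω else 0 with hpf
  have h10 : ∀ ω, tf 0 ω = 0 := fun ω => rfl
  have h11 : ∀ ω, tf 1 ω = σ ω := fun ω => rfl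
  have h12 : ∀ ω, tf 2 ω = τ ω := fun ω => rfl
  have hc0 : ∀ ω, pf 0 ω = 0 := fun ω => rfl
  have hc1 : ∀ ω, pf 1 ω = H ω := fun ω => rfl
  have hmono : ∀ j, j < 2 → ∀ ω, tf j ω ≤ tf (j + 1) ω := by
    intro j hj ω
    interval_cases j
    · rw [h10, h11]; exact hσ0 ω
    · rw [h11, h12]; exact hστ ω
  have hstop : ∀ j, j ≤ 2 → RST (stoppedFiltration F T) (tf j) := by
    intro j hj
    interval_cases j
    · have : tf 0 = fun _ => (0:ℝ) := funext h10
      rw [this]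
      exact stopped_stopping (fun _ => MeasurableSet.const _) (fun ω => le_of_lt hT)
    · have : tf 1 = σ := funext h11
      rw [this]
      exact stopped_stopping hσ hσT
    · have : tf 2 = τ := funext h12
      rw [this]
      exact stopped_stopping hτ hτT
  have hmeas : ∀ j, j < 2 →
      MeasurableAtTime (stoppedFiltration F T) (fun ω => ((tf j ω : ℝ) : EReal)) (pf j) := by
    intro j hj
    interval_cases j
    · have h1 : pf 0 = fun _ => (0 : EuclideanSpace ℝ (Fin D)) := funext hc0
      have h2 : (fun ω => ((tf 0 ω : ℝ) : EReal)) = fun _ => (((0:ℝ) : ℝ) : EReal) := by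
        funext ω; rw [h10]
      rw [h1, h2]
      exact mAt_const_filtration 0 0
    · have h1 : pf 1 = H := funext hc1
      have h2 : (fun ω => ((tf 1 ω : ℝ) : EReal)) = fun ω => ((σ ω : ℝ) : EReal) := by
        funext ω; rw [h11]
      rw [h1, h2]
      exact mAt_stoppedFiltration hσT hH
  set Φ : SimpleStrategy (stoppedFiltration F T) (EuclideanSpace ℝ (Fin D)) :=
    ⟨2, tf, pf, h10, hmono, fun j hj => rst_iff.2 (hstop j hj), hmeas⟩ with hΦ
  have hwe : ∀ ω, wealthEnd (fun t ω => X (min t T) ω) Φ ω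
      = ⟪H ω, X (τ ω) ω - X (σ ω) ω⟫ := by
    intro ω
    show (∑ j ∈ Finset.range 2,
      ⟪pf j ω, X (min (tf (j+1) ω) T) ω - X (min (tf j ω) T) ω⟫) = _
    rw [Finset.sum_range_succ, Finset.sum_range_one]
    rw [hc0, hc1, h10, h11, h12]
    rw [inner_zero_left, zero_add, min_eq_left (hτT ω), min_eq_left (hσT ω)]
  refine hNA T hT Φ ⟨?_, ?_⟩
  · filter_upwards [hpos] with ω hω
    rw [hwe ω]; exact hω
  · have hseteq : {ω | 0 < wealthEnd (fun t ω => X (min t T) ω) Φ ω}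
        = {ω | 0 < ⟪H ω, X (τ ω) ω - X (σ ω) ω⟫} := by
      ext ω; rw [mem_setOf_eq, hwe ω]; rfl
    rw [hseteq]
    exact hp

/-! ### No simple arbitrage implies NOA -/

theorem noa_of_noArb {X : ℝ → Ω' → EuclideanSpace ℝ (Fin D)} {P : Measure Ω'}
    [IsProbabilityMeasure P]
    (hUCr : ∀ t : ℝ, (F t : MeasurableSpace Ω') = ⨅ s : Ioi t, F (s : ℝ))
    (hAd : AdaptedProc F X) (hC : ContinuousPaths X)
    (hNA : NoSimpleArbitrageFiniteHorizons F P X) (T : ℝ) (hT : 0 < T) :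
    NOAUpTo F P X T := by
  intro σ hσ hσr hσltT H hHdir ε hε
  replace hσ := rst_iff.1 hσ
  by_contra hcon
  set S := {ω | σ ω < T} ∩
    {ω | ∃ δ : ℝ, δ < ε ∧ ∀ t : ℝ, σ ω ≤ t → t ≤ T → ⟪H ω, X t ω - X (σ ω) ω⟫ ≤ δ} with hS
  have hPS : P S = 0 := le_zero_iff.1 (not_lt.1 hcon)
  set Z := Zproc X σ H with hZ
  have hσ0 : ∀ ω, 0 ≤ σ ω := fun ω => (hσr ω).1
  have hσT : ∀ ω, σ ω ≤ T := fun ω => (hσr ω).2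
  obtain ⟨hHm, hH1⟩ := hHdir
  have hHm' : MAt F σ H := hHm
  set b := ehit σ Z {x : ℝ | ε / 2 < x} with hb
  have hOopen : IsOpen {x : ℝ | ε / 2 < x} := isOpen_lt continuous_const continuous_id
  have hble : ∀ t : ℝ, MeasurableSet[F t] {ω | b ω ≤ (t : EReal)} := fun t =>
    ehit_le_meas hUCr hσ hσ0 (fun ω => Zproc_cont hC σ H ω)
      (fun q hq => Zproc_guard hAd hC hσ hσ0 hHm' hq) hOopen t
  have hb0 : ∀ ω, (0 : EReal) ≤ b ω := fun ω =>
    le_trans (by exact_mod_cast hσ0 ω) (ehit_lb ω)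
  set τ' := ecap b T with hτ'
  have hτ's : RST F τ' := ecap_stopping hble hb0 (le_of_lt hT)
  have hτ'T : ∀ ω, τ' ω ≤ T := ecap_le_of_nonneg hb0 (le_of_lt hT)
  have hστ' : ∀ ω, σ ω ≤ τ' ω := fun ω => le_ecap (ehit_lb ω) (hσT ω)
  have hae1 : ∀ᵐ ω ∂P, ω ∉ S := by
    rw [ae_iff]
    simpa [not_not] using hPS
  have hkey : ∀ ω, ω ∉ S → 0 ≤ Z (τ' ω) ω ∧ (σ ω < T → ε / 2 ≤ Z (τ' ω) ω) := by
    intro ω hωS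
    rcases lt_or_ge (σ ω) T with hlt | hge
    · have hwit : ∃ t, σ ω ≤ t ∧ t ≤ T ∧ ε / 2 < Z t ω := by
        by_contra hno
        push_neg at hno
        exact hωS ⟨hlt, ⟨ε / 2, by linarith, fun t h1 h2 => hno t h1 h2⟩⟩
      obtain ⟨t, ht1, ht2, ht3⟩ := hwit
      have hbt : b ω ≤ (t : EReal) := ehit_le ht1 ht3
      have hbT : b ω ≤ (T : EReal) := le_trans hbt (EReal.coe_le_coe_iff.2 ht2)
      have hτeq : τ' ω = (b ω).toReal := by
        rw [hτ']; unfold ecap; rw [if_pos hbT]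
      have hZτ : ε / 2 ≤ Z (τ' ω) ω := by
        have hginf := ge_at_einf (Zproc_cont hC σ H ω) (a := σ ω) (c := T)
          (S := {s : ℝ | σ ω ≤ s ∧ Z s ω ∈ {x : ℝ | ε / 2 < x}})
          (fun s hs => hs.1) hbT (fun s hs => le_of_lt hs.2)
        rw [hτeq]
        exact hginf
      exact ⟨le_trans (by linarith) hZτ, fun _ => hZτ⟩
    · have hσeq : σ ω = T := le_antisymm (hσT ω) hge
      have hτeq : τ' ω = σ ω := le_antisymm (hσeq ▸ hτ'T ω) (hστ' ω)
      constructor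
      · rw [hτeq, hZ, Zproc_self]
      · intro hc; exact absurd hσeq (ne_of_lt hc)
  have hpos : ∀ᵐ ω ∂P, 0 ≤ ⟪H ω, X (τ' ω) ω - X (σ ω) ω⟫ := by
    filter_upwards [hae1] with ω hω
    exact (hkey ω hω).1
  have hppos : 0 < P {ω | 0 < ⟪H ω, X (τ' ω) ω - X (σ ω) ω⟫} := by
    have hsub : {ω | σ ω < T} ⊆ S ∪ {ω | 0 < ⟪H ω, X (τ' ω) ω - X (σ ω) ω⟫} := by
      intro ω hω
      by_cases hSω : ω ∈ S
      · exact Or.inl hSω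
      · exact Or.inr (lt_of_lt_of_le (by linarith) ((hkey ω hSω).2 hω))
    have h1 : P {ω | σ ω < T} ≤ P S + P {ω | 0 < ⟪H ω, X (τ' ω) ω - X (σ ω) ω⟫} :=
      le_trans (measure_mono hsub) (measure_union_le _ _)
    rw [hPS, zero_add] at h1
    exact lt_of_lt_of_le hσltT h1
  exact pair_strategy hNA hT hσ hτ's hσ0 hστ' hσT hτ'T hHm' hpos hppos

/-! ### No simple arbitrage implies TWC -/

theorem ehit_lt_dest {A : Ω' → ℝ} {Z : ℝ → Ω' → ℝ} {O : Set ℝ} {ω : Ω'} {c : ℝ}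
    (h : ehit A Z O ω < (c : EReal)) : ∃ s, (A ω ≤ s ∧ Z s ω ∈ O) ∧ s < c :=
  einf_lt h

theorem ehit_ge_at {Z : ℝ → Ω' → ℝ} {ω : Ω'} (hc : Continuous fun s => Z s ω)
    {A : Ω' → ℝ} {O : Set ℝ} {c θ : ℝ}
    (hfin : ehit A Z O ω ≤ (c : EReal)) (hv : ∀ s, A ω ≤ s → Z s ω ∈ O → θ ≤ Z s ω) :
    θ ≤ Z (ehit A Z O ω).toReal ω :=
  ge_at_einf hc (a := A ω) (fun s hs => hs.1) hfin (fun s hs => hv s hs.1 hs.2)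

theorem mAt_neg {σ : Ω' → ℝ} {H : Ω' → EuclideanSpace ℝ (Fin D)}
    (hσ : RST F σ) (h : MAt F σ H) : MAt F σ (fun ω => -H ω) :=
  mAt_of_agrees hσ (fun t => ⟨fun ω => -(if σ ω ≤ t then H ω else 0),
    (mAt_elim 0 hσ h t).neg, fun ω hωt => by simp [hωt]⟩)

theorem twc_core {X : ℝ → Ω' → EuclideanSpace ℝ (Fin D)} {P : Measure Ω'}
    [IsProbabilityMeasure P]
    (hUCr : ∀ t : ℝ, (F t : MeasurableSpace Ω') = ⨅ s : Ioi t, F (s : ℝ))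
    (hAd : AdaptedProc F X) (hC : ContinuousPaths X)
    (hNA : NoSimpleArbitrageFiniteHorizons F P X)
    {σ : Ω' → ℝ} (hσ : RST F σ) (hσ0 : ∀ ω, 0 ≤ σ ω) {K : ℝ} (hK : ∀ ω, σ ω ≤ K)
    {H : Ω' → EuclideanSpace ℝ (Fin D)} (hHm : MAt F σ H)
    (hp : 0 < P {ω | ehit σ (Zproc X σ H) {x : ℝ | 0 < x} ω
        < ehit σ (Zproc X σ H) {x : ℝ | x < 0} ω}) : False := by
  set Z := Zproc X σ H with hZdef
  set ρp : Ω' → EReal := fun ω => ehit σ Z {x : ℝ | 0 < x} ω with hρp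
  set ρm : Ω' → EReal := fun ω => ehit σ Z {x : ℝ | x < 0} ω with hρm
  have hZc : ∀ ω, Continuous fun s => Z s ω := fun ω => Zproc_cont hC σ H ω
  have hZg : ∀ q : ℝ, 0 ≤ q → ∃ W : Ω' → ℝ, Measurable[F q] W ∧ ∀ ω, σ ω ≤ q → W ω = Z q ω :=
    fun q hq => Zproc_guard hAd hC hσ hσ0 hHm hq
  have hρplb : ∀ ω, ((σ ω : ℝ) : EReal) ≤ ρp ω := fun ω => ehit_lb ω
  have hρp0 : ∀ ω, (0 : EReal) ≤ ρp ω := fun ω =>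
    le_trans (by exact_mod_cast hσ0 ω) (hρplb ω)
  -- decomposition of the event into countably many pieces
  set Ekm : ℕ → ℕ → Set Ω' := fun k m => {ω | ρp ω < ρm ω ∧ ∃ t : ℝ, ρp ω ≤ (t : EReal) ∧
    t ≤ (m : ℝ) ∧ (t : EReal) < ρm ω ∧ 1 / ((k : ℝ) + 1) < Z t ω} with hEkm
  have hGsub : {ω | ρp ω < ρm ω} ⊆ ⋃ p : ℕ × ℕ, Ekm p.1 p.2 := by
    intro ω hω
    simp only [mem_setOf_eq] at hω
    have hnebot : ρp ω ≠ ⊥ := fun hb => by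
      have := hρplb ω; rw [hb] at this; simp at this
    have hnetop : ρp ω ≠ ⊤ := ne_top_of_lt (lt_of_lt_of_le hω le_top)
    have hcoe : (((ρp ω).toReal : ℝ) : EReal) = ρp ω := EReal.coe_toReal hnetop hnebot
    obtain ⟨c, hc1, hc2⟩ : ∃ c : ℝ, ρp ω < (c : EReal) ∧ (c : EReal) < ρm ω := by
      by_cases htop : ρm ω = ⊤
      · refine ⟨(ρp ω).toReal + 1, ?_, ?_⟩
        · calc ρp ω = (((ρp ω).toReal : ℝ) : EReal) := hcoe.symm
            _ < (((ρp ω).toReal + 1 : ℝ) : EReal) := EReal.coe_lt_coe_iff.2 (by linarith)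
        · rw [htop]; exact EReal.coe_lt_top _
      · have hnebot' : ρm ω ≠ ⊥ := fun hb => by
          rw [hb] at hω; exact absurd hω (by simp)
        have hcoe' : (((ρm ω).toReal : ℝ) : EReal) = ρm ω := EReal.coe_toReal htop hnebot'
        have hlt : (ρp ω).toReal < (ρm ω).toReal := by
          have h := hω
          rw [← hcoe, ← hcoe'] at h
          exact EReal.coe_lt_coe_iff.1 h
        refine ⟨((ρp ω).toReal + (ρm ω).toReal) / 2, ?_, ?_⟩
        · calc ρp ω = (((ρp ω).toReal : ℝ) : EReal) := hcoe.symm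
            _ < ((((ρp ω).toReal + (ρm ω).toReal) / 2 : ℝ) : EReal) :=
              EReal.coe_lt_coe_iff.2 (by linarith)
        · calc ((((ρp ω).toReal + (ρm ω).toReal) / 2 : ℝ) : EReal)
              < (((ρm ω).toReal : ℝ) : EReal) := EReal.coe_lt_coe_iff.2 (by linarith)
            _ = ρm ω := hcoe'
    obtain ⟨s, ⟨hs1, hs2⟩, hs3⟩ := ehit_lt_dest hc1
    simp only [mem_setOf_eq] at hs2
    have hρps : ρp ω ≤ (s : EReal) := ehit_le hs1 hs2
    have hsρm : (s : EReal) < ρm ω := lt_of_lt_of_le (EReal.coe_lt_coe_iff.2 hs3) (le_of_lt hc2)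
    set k := ⌈1 / Z s ω⌉₊ with hk
    have hkZ : 1 / ((k : ℝ) + 1) < Z s ω := by
      have h1 : 1 / Z s ω ≤ (k : ℝ) := Nat.le_ceil _
      have h2 : 1 / Z s ω < (k : ℝ) + 1 := by linarith
      rw [div_lt_iff₀ hs2] at h2
      rw [div_lt_iff₀ (by positivity)]
      nlinarith
    set m := ⌈s⌉₊ with hm
    have hsm : s ≤ (m : ℝ) := Nat.le_ceil _
    exact mem_iUnion.2 ⟨(k, m), hω, s, hρps, hsm, hsρm, hkZ⟩
  obtain ⟨k, m, hPE⟩ : ∃ k m : ℕ, 0 < P (Ekm k m) := by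
    by_contra hno
    push_neg at hno
    have hz : ∀ p : ℕ × ℕ, P (Ekm p.1 p.2) = 0 := fun p =>
      le_zero_iff.1 (hno p.1 p.2)
    have h1 : P {ω | ρp ω < ρm ω} ≤ ∑' p : ℕ × ℕ, P (Ekm p.1 p.2) :=
      le_trans (measure_mono hGsub) (measure_iUnion_le _)
    rw [ENNReal.tsum_eq_zero.2 hz] at h1
    exact absurd (le_zero_iff.1 h1) (ne_of_gt hp)
  -- the horizon
  set T : ℝ := max (max (m : ℝ) (K + 1)) 1 with hTdef
  have hT : 0 < T := lt_of_lt_of_le one_pos (le_max_right _ _)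
  have hmT : (m : ℝ) ≤ T := le_trans (le_max_left _ _) (le_max_left _ _)
  have hKT : K + 1 ≤ T := le_trans (le_max_right _ _) (le_max_left _ _)
  have hσT : ∀ ω, σ ω ≤ T := fun ω => le_trans (hK ω) (by linarith)
  -- entry time α
  have hρple : ∀ t : ℝ, MeasurableSet[F t] {ω | ρp ω ≤ (t : EReal)} := fun t =>
    ehit_le_meas hUCr hσ hσ0 hZc hZg (isOpen_lt continuous_const continuous_id) t
  set α := ecap ρp T with hα
  have hαs : RST F α := ecap_stopping hρple hρp0 (le_of_lt hT)
  have hαT : ∀ ω, α ω ≤ T := ecap_le_of_nonneg hρp0 (le_of_lt hT)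
  have hσα : ∀ ω, σ ω ≤ α ω := fun ω => le_ecap (hρplb ω) (hσT ω)
  have hα0 : ∀ ω, 0 ≤ α ω := fun ω => le_trans (hσ0 ω) (hσα ω)
  -- exit times
  have hZgα : ∀ q : ℝ, 0 ≤ q → ∃ W : Ω' → ℝ, Measurable[F q] W ∧ ∀ ω, α ω ≤ q → W ω = Z q ω := by
    intro q hq
    obtain ⟨W, hW, hWa⟩ := hZg q hq
    exact ⟨W, hW, fun ω hωq => hWa ω (le_trans (hσα ω) hωq)⟩
  set βh : Ω' → EReal := fun ω => ehit α Z {x : ℝ | x < 0} ω with hβh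
  set hhit : Ω' → EReal := fun ω => ehit α Z {x : ℝ | 1 / (2 * ((k : ℝ) + 1)) < x} ω with hhh
  set δs : Ω' → EReal := fun ω => min (hhit ω) (βh ω) with hδs
  have hβhle : ∀ t : ℝ, MeasurableSet[F t] {ω | βh ω ≤ (t : EReal)} := fun t =>
    ehit_le_meas hUCr hαs hα0 hZc hZgα (isOpen_lt continuous_id continuous_const) t
  have hhhle : ∀ t : ℝ, MeasurableSet[F t] {ω | hhit ω ≤ (t : EReal)} := fun t =>
    ehit_le_meas hUCr hαs hα0 hZc hZgα (isOpen_lt continuous_const continuous_id) t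
  have hδle : ∀ t : ℝ, MeasurableSet[F t] {ω | δs ω ≤ (t : EReal)} := by
    intro t
    have : {ω | δs ω ≤ (t : EReal)} = {ω | hhit ω ≤ (t : EReal)} ∪ {ω | βh ω ≤ (t : EReal)} := by
      ext ω; simp only [mem_setOf_eq, mem_union, hδs, min_le_iff]
    rw [this]
    exact (hhhle t).union (hβhle t)
  have hδlb : ∀ ω, ((α ω : ℝ) : EReal) ≤ δs ω := fun ω =>
    le_min (ehit_lb ω) (ehit_lb ω)
  have hδ0 : ∀ ω, (0 : EReal) ≤ δs ω := fun ω =>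
    le_trans (by exact_mod_cast hα0 ω) (hδlb ω)
  set γ := ecap δs T with hγ
  have hγs : RST F γ := ecap_stopping hδle hδ0 (le_of_lt hT)
  have hγT : ∀ ω, γ ω ≤ T := ecap_le_of_nonneg hδ0 (le_of_lt hT)
  have hαγ : ∀ ω, α ω ≤ γ ω := fun ω => le_ecap (hδlb ω) (hαT ω)
  -- the value at α vanishes when ρp ≤ T
  have hZα0 : ∀ ω, ρp ω ≤ (T : EReal) → Z (α ω) ω = 0 := by
    intro ω hρT
    have hαt : α ω = (ρp ω).toReal := by rw [hα]; unfold ecap; rw [if_pos hρT]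
    have hαcoe : ((α ω : ℝ) : EReal) = ρp ω := ecap_coe (hρplb ω) hρT
    have hge : 0 ≤ Z (α ω) ω := by
      rw [hαt]
      exact ehit_ge_at (hZc ω) hρT (fun s _ hsO => le_of_lt hsO)
    have hle' : Z (α ω) ω ≤ 0 := by
      refine le_at_left (hZc ω) (hσα ω) (le_of_eq (Zproc_self σ H ω)) ?_
      intro t h1 h2
      by_contra hpos'
      push_neg at hpos'
      have : ρp ω ≤ (t : EReal) := ehit_le h1 hpos'
      rw [← hαcoe] at this
      exact absurd h2 (not_lt.2 (EReal.coe_le_coe_iff.1 this))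
    linarith
  -- nonnegativity of Z strictly before δs
  have hZnn : ∀ ω t, α ω ≤ t → (t : EReal) < δs ω → 0 ≤ Z t ω := by
    intro ω t h1 h2
    by_contra hneg
    push_neg at hneg
    have : βh ω ≤ (t : EReal) := ehit_le h1 hneg
    exact absurd (lt_of_lt_of_le h2 (min_le_right _ _)) (not_lt.2 this)
  -- the terminal gain is nonnegative everywhere
  have hgain : ∀ ω, 0 ≤ Z (γ ω) ω - Z (α ω) ω := by
    intro ω
    by_cases hρT : ρp ω ≤ (T : EReal)
    · rw [hZα0 ω hρT, sub_zero]
      by_cases hδT : δs ω ≤ (T : EReal)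
      · have hγcoe : ((γ ω : ℝ) : EReal) = δs ω := ecap_coe (hδlb ω) hδT
        refine ge_at_left (hZc ω) (hαγ ω) (le_of_eq (hZα0 ω hρT).symm) ?_
        intro t h1 h2
        refine hZnn ω t h1 ?_
        rw [← hγcoe]
        exact EReal.coe_lt_coe_iff.2 h2
      · have hγeq : γ ω = T := by rw [hγ]; unfold ecap; rw [if_neg hδT]
        rw [hγeq]
        refine hZnn ω T (hαT ω) ?_
        exact lt_of_not_ge hδT
    · have hαeq : α ω = T := by rw [hα]; unfold ecap; rw [if_neg hρT]
      have hγeq : γ ω = T := by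
        rw [hγ]; unfold ecap
        split_ifs with h
        · have h2 : ((T : ℝ) : EReal) ≤ δs ω := by
            have := hδlb ω; rwa [hαeq] at this
          have : δs ω = ((T : ℝ) : EReal) := le_antisymm h h2
          rw [this, EReal.toReal_coe]
        · rfl
      rw [hαeq, hγeq, sub_self]
  -- strict gain on the event
  have hstrict : ∀ ω, ω ∈ Ekm k m → 0 < Z (γ ω) ω - Z (α ω) ω := by
    intro ω hω
    obtain ⟨hlt, t, ht1, ht2, ht3, ht4⟩ := hω
    have htT : (t : EReal) ≤ (T : EReal) :=
      EReal.coe_le_coe_iff.2 (le_trans ht2 hmT)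
    have hρT : ρp ω ≤ (T : EReal) := le_trans ht1 htT
    have hαcoe : ((α ω : ℝ) : EReal) = ρp ω := ecap_coe (hρplb ω) hρT
    have hαt : α ω ≤ t := by
      have : ((α ω : ℝ) : EReal) ≤ (t : EReal) := by rw [hαcoe]; exact ht1
      exact EReal.coe_le_coe_iff.1 this
    have hhalf : 1 / (2 * ((k : ℝ) + 1)) < 1 / ((k : ℝ) + 1) :=
      one_div_lt_one_div_of_lt (by positivity) (by linarith)
    have hhle : hhit ω ≤ (t : EReal) := ehit_le hαt (by exact lt_trans hhalf ht4)
    have hβρ : ρm ω ≤ βh ω := ehit_mono (hσα ω)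
    have hhβ : hhit ω < βh ω := lt_of_le_of_lt hhle (lt_of_lt_of_le ht3 hβρ)
    have hδeq : δs ω = hhit ω := min_eq_left (le_of_lt hhβ)
    have hδT : δs ω ≤ (T : EReal) := by rw [hδeq]; exact le_trans hhle htT
    have hγeq : γ ω = (hhit ω).toReal := by
      have h1 : γ ω = (δs ω).toReal := by
        show ecap δs T ω = (δs ω).toReal
        unfold ecap
        rw [if_pos hδT]
      rw [h1, hδeq]
    have hZγ : 1 / (2 * ((k : ℝ) + 1)) ≤ Z (γ ω) ω := by
      rw [hγeq]
      exact ehit_ge_at (hZc ω) (hδeq ▸ hδT) (fun s _ hsO => le_of_lt hsO)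
    rw [hZα0 ω hρT, sub_zero]
    exact lt_of_lt_of_le (by positivity) hZγ
  -- assemble the pair strategy and contradict no-arbitrage
  have hpos : ∀ᵐ ω ∂P, 0 ≤ ⟪H ω, X (γ ω) ω - X (α ω) ω⟫ := by
    refine Filter.Eventually.of_forall (fun ω => ?_)
    have := hgain ω
    rwa [Zproc_sub σ H (α ω) (γ ω) ω] at this
  have hppos : 0 < P {ω | 0 < ⟪H ω, X (γ ω) ω - X (α ω) ω⟫} := by
    refine lt_of_lt_of_le hPE (measure_mono ?_)
    intro ω hω
    have := hstrict ω hω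
    rw [Zproc_sub σ H (α ω) (γ ω) ω] at this
    exact this
  exact pair_strategy hNA hT hαs hγs hα0 hαγ hαT hγT
    (mAt_mono hαs hσα hHm) hpos hppos

theorem twc_of_noArb {X : ℝ → Ω' → EuclideanSpace ℝ (Fin D)} {P : Measure Ω'}
    [IsProbabilityMeasure P]
    (hUCr : ∀ t : ℝ, (F t : MeasurableSpace Ω') = ⨅ s : Ioi t, F (s : ℝ))
    (hAd : AdaptedProc F X) (hC : ContinuousPaths X)
    (hNA : NoSimpleArbitrageFiniteHorizons F P X) :
    TWCBounded F P X := by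
  rintro σ hσ hσ0 ⟨K, hK⟩ H ⟨hHm, hH1⟩
  replace hσ := rst_iff.1 hσ
  unfold TWCAt
  by_contra hcon
  rw [ae_iff] at hcon
  have hHm' : MAt F σ H := hHm
  set ρp : Ω' → EReal := fun ω => ehit σ (Zproc X σ H) {x : ℝ | 0 < x} ω with hρp
  set ρm : Ω' → EReal := fun ω => ehit σ (Zproc X σ H) {x : ℝ | x < 0} ω with hρm
  have heq1 : ∀ ω, hittingAfter X (fun ω' => ((σ ω' : ℝ) : EReal)) H ω = ρp ω :=
    fun ω => hittingAfter_eq σ H ω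
  have heq2 : ∀ ω, hittingAfter X (fun ω' => ((σ ω' : ℝ) : EReal)) (fun ω' => -H ω') ω = ρm ω :=
    fun ω => by rw [hittingAfter_eq σ (fun ω' => -H ω') ω, ehit_neg_eq σ H ω]
  have hsub : {ω | ¬ hittingAfter X (fun ω' => ((σ ω' : ℝ) : EReal)) H ω
        = hittingAfter X (fun ω' => ((σ ω' : ℝ) : EReal)) (fun ω' => -H ω') ω}
      ⊆ {ω | ρp ω < ρm ω} ∪ {ω | ρm ω < ρp ω} := by
    intro ω hω
    simp only [mem_setOf_eq, heq1, heq2] at hω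
    rcases lt_or_gt_of_ne hω with h | h
    · exact Or.inl h
    · exact Or.inr h
  by_cases h1 : 0 < P {ω | ρp ω < ρm ω}
  · exact twc_core hUCr hAd hC hNA hσ hσ0 hK hHm' h1
  · by_cases h2 : 0 < P {ω | ρm ω < ρp ω}
    · refine twc_core hUCr hAd hC hNA hσ hσ0 hK (mAt_neg hσ hHm') ?_
      have e1 : ∀ ω, ehit σ (Zproc X σ (fun ω' => -H ω')) {x : ℝ | 0 < x} ω = ρm ω :=
        fun ω => ehit_neg_eq σ H ω
      have e2 : ∀ ω, ehit σ (Zproc X σ (fun ω' => -H ω')) {x : ℝ | x < 0} ω = ρp ω := by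
        intro ω
        have h := ehit_neg_eq (X := X) σ (fun ω' => -H ω') ω
        simp only [neg_neg] at h
        rw [← h, hρp]
      have : {ω | ehit σ (Zproc X σ (fun ω' => -H ω')) {x : ℝ | 0 < x} ω
          < ehit σ (Zproc X σ (fun ω' => -H ω')) {x : ℝ | x < 0} ω} = {ω | ρm ω < ρp ω} := by
        ext ω; simp only [mem_setOf_eq, e1, e2]
      rwa [this]
    · have hz1 : P {ω | ρp ω < ρm ω} = 0 := le_zero_iff.1 (not_lt.1 h1)
      have hz2 : P {ω | ρm ω < ρp ω} = 0 := le_zero_iff.1 (not_lt.1 h2)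
      have : P {ω | ¬ hittingAfter X (fun ω' => ((σ ω' : ℝ) : EReal)) H ω
          = hittingAfter X (fun ω' => ((σ ω' : ℝ) : EReal)) (fun ω' => -H ω') ω} = 0 := by
        refine le_zero_iff.1 ?_
        refine le_trans (measure_mono hsub) ?_
        refine le_trans (measure_union_le _ _) ?_
        rw [hz1, hz2, add_zero]
      exact hcon this

theorem ehit_le_at {Z : ℝ → Ω' → ℝ} {ω : Ω'} (hc : Continuous fun s => Z s ω)
    {A : Ω' → ℝ} {O : Set ℝ} {c θ : ℝ}
    (hfin : ehit A Z O ω ≤ (c : EReal)) (hv : ∀ s, A ω ≤ s → Z s ω ∈ O → Z s ω ≤ θ) :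
    Z (ehit A Z O ω).toReal ω ≤ θ :=
  le_at_einf hc (a := A ω) (fun s hs => hs.1) hfin (fun s hs => hv s hs.1 hs.2)

theorem measurable_unitize {g : Ω' → EuclideanSpace ℝ (Fin D)} (m : MeasurableSpace Ω')
    (hg : Measurable[m] g) (e : EuclideanSpace ℝ (Fin D)) :
    Measurable[m] fun ω => if g ω = 0 then e else ‖g ω‖⁻¹ • g ω := by
  intro B hB
  show MeasurableSet[m] _
  have h1 : Measurable[m] (fun ω => ‖g ω‖⁻¹ • g ω) := (hg.norm.inv).smul hg
  have hset : (fun ω => if g ω = 0 then e else ‖g ω‖⁻¹ • g ω) ⁻¹' B =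
      ((if e ∈ B then g ⁻¹' {0} else ∅) ∪
        ((fun ω => ‖g ω‖⁻¹ • g ω) ⁻¹' B \ g ⁻¹' {0})) := by
    ext ω
    by_cases h0 : g ω = 0 <;> by_cases heB : e ∈ B <;>
      simp [h0, heB]
  rw [hset]
  refine MeasurableSet.union ?_ ((h1 hB).diff (hg (measurableSet_singleton 0)))
  split_ifs
  · exact hg (measurableSet_singleton 0)
  · exact @MeasurableSet.empty _ m

/-- Core of the sufficiency proof: a one-step strategy `φ 1_A 1_{(σf,τf0]}` whose terminal
gain is a.s. nonnegative cannot have a strictly positive gain with positive probability. -/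
theorem noArb_core {X : ℝ → Ω' → EuclideanSpace ℝ (Fin D)} {P : Measure Ω'}
    [IsProbabilityMeasure P]
    (hUCr : ∀ t : ℝ, (F t : MeasurableSpace Ω') = ⨅ s : Ioi t, F (s : ℝ))
    (hAd : AdaptedProc F X) (hC : ContinuousPaths X)
    (hTWC : TWCBounded F P X) (hNOA : ∀ T : ℝ, 0 < T → NOAUpTo F P X T)
    {T : ℝ} (hT : 0 < T)
    {σf τf0 : Ω' → ℝ} {φ : Ω' → EuclideanSpace ℝ (Fin D)} {A : Set Ω'}
    (hσfs : RST F σf) (hτ0s : RST F τf0)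
    (hσf0 : ∀ ω, 0 ≤ σf ω) (hστ0 : ∀ ω, σf ω ≤ τf0 ω)
    (hσfT : ∀ ω, σf ω ≤ T) (hτ0T : ∀ ω, τf0 ω ≤ T)
    (hφm : MAt F σf φ)
    (hAmeas : ∀ t : ℝ, MeasurableSet[F t] (A ∩ {ω | σf ω ≤ t}))
    (hAae : ∀ᵐ ω ∂P, ω ∈ A → 0 ≤ ⟪φ ω, X (τf0 ω) ω - X (σf ω) ω⟫) :
    ¬ 0 < P (A ∩ {ω | 0 < ⟪φ ω, X (τf0 ω) ω - X (σf ω) ω⟫}) := by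
  intro hApos
  classical
  -- dimension zero: all inner products vanish
  rcases Nat.eq_zero_or_pos D with hD0 | hDpos
  · subst hD0
    have hzero : ∀ ω, (⟪φ ω, X (τf0 ω) ω - X (σf ω) ω⟫ : ℝ) = 0 := by
      intro ω
      have : φ ω = 0 := by ext i; exact i.elim0
      rw [this, inner_zero_left]
    have : A ∩ {ω | 0 < ⟪φ ω, X (τf0 ω) ω - X (σf ω) ω⟫} = ∅ := by
      ext ω
      simp [hzero ω]
    rw [this] at hApos
    simp at hApos
  -- main case
  set e : EuclideanSpace ℝ (Fin D) := EuclideanSpace.single (⟨0, hDpos⟩ : Fin D) (1 : ℝ) with he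
  have he1 : ‖e‖ = 1 := by rw [he, EuclideanSpace.norm_single]; norm_num
  set ψ : Ω' → EuclideanSpace ℝ (Fin D) := fun ω => if ω ∈ A then φ ω else 0 with hψ
  set τf : Ω' → ℝ := fun ω => if ω ∈ A then τf0 ω else σf ω with hτf
  have hστf : ∀ ω, σf ω ≤ τf ω := by
    intro ω; simp only [hτf]
    split_ifs with h
    · exact hστ0 ω
    · exact le_refl _
  have hτfT : ∀ ω, τf ω ≤ T := by
    intro ω; simp only [hτf]
    split_ifs with h
    · exact hτ0T ω
    · exact hσfT ω
  have hψm : MAt F σf ψ := by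
    refine mAt_of_agrees hσfs ?_
    intro t
    refine ⟨(A ∩ {ω' | σf ω' ≤ t}).indicator (fun ω => if σf ω ≤ t then φ ω else 0),
      ?_, ?_⟩
    · exact (mAt_elim 0 hσfs hφm t).indicator (hAmeas t)
    · intro ω hωt
      show ψ ω = _
      by_cases hA : ω ∈ A <;>
        simp [hψ, Set.indicator_apply, hA, hωt]
  have hτfs : RST F τf := by
    intro t
    have hset : {ω | τf ω ≤ t} = (A ∩ {ω | σf ω ≤ t} ∩ {ω | τf0 ω ≤ t}) ∪
        ({ω | σf ω ≤ t} \ (A ∩ {ω | σf ω ≤ t})) := by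
      ext ω
      simp only [mem_setOf_eq, mem_union, mem_inter_iff, mem_diff, hτf]
      by_cases hA : ω ∈ A
      · rw [if_pos hA]
        constructor
        · intro h
          exact Or.inl ⟨⟨hA, le_trans (hστ0 ω) h⟩, h⟩
        · rintro (⟨⟨_, _⟩, h2⟩ | ⟨h1, h2⟩)
          · exact h2
          · exact absurd ⟨hA, h1⟩ h2
      · rw [if_neg hA]
        constructor
        · intro h
          exact Or.inr ⟨h, fun hc : ω ∈ A ∧ σf ω ≤ t => hA hc.1⟩
        · rintro (⟨⟨hA', _⟩, _⟩ | ⟨h1, _⟩)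
          · exact absurd hA' hA
          · exact h1
    rw [hset]
    exact ((hAmeas t).inter (hτ0s t)).union ((hσfs t).diff (hAmeas t))
  set H : Ω' → EuclideanSpace ℝ (Fin D) :=
    fun ω => if ψ ω = 0 then e else ‖ψ ω‖⁻¹ • ψ ω with hH
  have hH1 : ∀ ω, ‖H ω‖ = 1 := by
    intro ω; simp only [hH]
    split_ifs with h
    · exact he1
    · rw [norm_smul, norm_inv, norm_norm, inv_mul_cancel₀ (norm_ne_zero_iff.2 h)]
  have hHm : MAt F σf H := by
    refine mAt_of_agrees hσfs ?_
    intro t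
    have hGψ : Measurable[F t] (fun ω => if σf ω ≤ t then ψ ω else 0) :=
      mAt_elim 0 hσfs hψm t
    refine ⟨fun ω => if (if σf ω ≤ t then ψ ω else 0) = 0 then e
      else ‖(if σf ω ≤ t then ψ ω else 0)‖⁻¹ • (if σf ω ≤ t then ψ ω else 0), ?_, ?_⟩
    · exact measurable_unitize (F t) hGψ e
    · intro ω hωt
      show H ω = _
      simp only [hH]
      simp only [if_pos hωt]
  set τ' : Ω' → ℝ := fun ω => if ψ ω = 0 then σf ω else τf ω with hτ'
  have hστ' : ∀ ω, σf ω ≤ τ' ω := by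
    intro ω; simp only [hτ']
    split_ifs with h
    · exact le_refl _
    · exact hστf ω
  have hτ'T : ∀ ω, τ' ω ≤ T := by
    intro ω; simp only [hτ']
    split_ifs with h
    · exact hσfT ω
    · exact hτfT ω
  have hτ's : RST F τ' := by
    intro t
    have hψ0meas : MeasurableSet[F t] (ψ ⁻¹' {0} ∩ {ω | σf ω ≤ t}) :=
      mAt_iff'.1 hψm {0} (measurableSet_singleton 0) t
    have hset : {ω | τ' ω ≤ t} = (ψ ⁻¹' {0} ∩ {ω | σf ω ≤ t}) ∪
        ({ω | τf ω ≤ t} \ (ψ ⁻¹' {0} ∩ {ω | σf ω ≤ t} ∩ {ω | τf ω ≤ t})) := by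
      ext ω
      simp only [mem_setOf_eq, mem_union, mem_inter_iff, mem_diff, mem_preimage,
        mem_singleton_iff, hτ']
      by_cases h0 : ψ ω = 0
      · rw [if_pos h0]
        constructor
        · intro h; exact Or.inl ⟨h0, h⟩
        · rintro (⟨_, h⟩ | ⟨h1, _⟩)
          · exact h
          · exact le_trans (hστf ω) h1
      · rw [if_neg h0]
        constructor
        · intro h
          exact Or.inr ⟨h, fun hc : (ψ ω = 0 ∧ σf ω ≤ t) ∧ τf ω ≤ t => h0 hc.1.1⟩
        · rintro (⟨h0', _⟩ | ⟨h1, _⟩)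
          · exact absurd h0' h0
          · exact h1
    rw [hset]
    exact hψ0meas.union ((hτfs t).diff ((hψ0meas.inter (hτfs t))))
  -- the key identities
  have hinner : ∀ ω, (⟪ψ ω, X (τf ω) ω - X (σf ω) ω⟫ : ℝ)
      = ‖ψ ω‖ * Zproc X σf H (τ' ω) ω := by
    intro ω
    by_cases h0 : ψ ω = 0
    · rw [h0, inner_zero_left, norm_zero, zero_mul]
    · have hτ'eq : τ' ω = τf ω := by simp only [hτ']; exact if_neg h0
      have hHeq : H ω = ‖ψ ω‖⁻¹ • ψ ω := by simp only [hH]; exact if_neg h0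
      rw [hτ'eq]
      show (⟪ψ ω, X (τf ω) ω - X (σf ω) ω⟫ : ℝ) = ‖ψ ω‖ * ⟪H ω, X (τf ω) ω - X (σf ω) ω⟫
      rw [hHeq, real_inner_smul_left, ← mul_assoc,
        mul_inv_cancel₀ (norm_ne_zero_iff.2 h0), one_mul]
  have hξA : ∀ ω, (⟪ψ ω, X (τf ω) ω - X (σf ω) ω⟫ : ℝ)
      = (if ω ∈ A then ⟪φ ω, X (τf0 ω) ω - X (σf ω) ω⟫ else 0) := by
    intro ω
    by_cases hA : ω ∈ A
    · rw [if_pos hA, hψ, hτf]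
      simp only [if_pos hA]
    · rw [if_neg hA, hψ, hτf]
      simp only [if_neg hA]
      rw [inner_zero_left]
  have hZae : ∀ᵐ ω ∂P, 0 ≤ Zproc X σf H (τ' ω) ω := by
    filter_upwards [hAae] with ω hω
    by_cases h0 : ψ ω = 0
    · have hτ'eq : τ' ω = σf ω := by simp only [hτ']; exact if_pos h0
      rw [hτ'eq, Zproc_self]
    · have hψA : ω ∈ A := by
        by_contra hc
        exact h0 (by simp only [hψ, if_neg hc])
      have h1 : (0:ℝ) ≤ ⟪ψ ω, X (τf ω) ω - X (σf ω) ω⟫ := by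
        rw [hξA ω, if_pos hψA]; exact hω hψA
      rw [hinner ω] at h1
      by_contra hZ
      push_neg at hZ
      exact absurd h1 (not_le.2 (mul_neg_of_pos_of_neg (norm_pos_iff.2 h0) hZ))
  have hZpos : 0 < P {ω | 0 < Zproc X σf H (τ' ω) ω} := by
    refine lt_of_lt_of_le hApos (measure_mono ?_)
    rintro ω ⟨hωA, hωξ⟩
    have h1 : (0:ℝ) < ⟪ψ ω, X (τf ω) ω - X (σf ω) ω⟫ := by
      rw [hξA ω, if_pos hωA]; exact hωξ
    rw [hinner ω] at h1
    show 0 < Zproc X σf H (τ' ω) ω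
    by_contra hZ
    push_neg at hZ
    exact absurd h1 (not_lt.2 (mul_nonpos_of_nonneg_of_nonpos (norm_nonneg _) hZ))
  -- TWC at σf along H
  have hHdir : IsDirection F P (fun ω => ((σf ω : ℝ) : EReal)) H :=
    ⟨hHm, Filter.Eventually.of_forall hH1⟩
  have hTWCa := hTWC σf (rst_iff.2 hσfs) hσf0 ⟨T, hσfT⟩ H hHdir
  have hTWC' : ∀ᵐ ω ∂P, ehit σf (Zproc X σf H) {x : ℝ | 0 < x} ω
      = ehit σf (Zproc X σf H) {x : ℝ | x < 0} ω := by
    filter_upwards [hTWCa] with ω hω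
    rw [← hittingAfter_eq, ← ehit_neg_eq, ← hittingAfter_eq]
    exact hω
  -- Step 1: dipping below any negative level before τ' has probability zero
  have hstep1 : ∀ k : ℕ, P {ω | ehit σf (Zproc X σf H) {x | x < -(1 / ((k:ℝ) + 1))} ω
      < ((τ' ω : ℝ) : EReal)} = 0 := by
    intro k
    by_contra hcon
    set ε : ℝ := 1 / ((k:ℝ) + 1) with hε
    have hεpos : 0 < ε := by positivity
    set bk : Ω' → EReal := fun ω => ehit σf (Zproc X σf H) {x | x < -ε} ω with hbk
    set C := {ω | bk ω < ((τ' ω : ℝ) : EReal)} with hCdef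
    have hPC : 0 < P C := pos_iff_ne_zero.2 hcon
    have hbkle : ∀ t : ℝ, MeasurableSet[F t] {ω | bk ω ≤ (t : EReal)} := fun t =>
      ehit_le_meas hUCr hσfs hσf0 (fun ω => Zproc_cont hC σf H ω)
        (fun q hq => Zproc_guard hAd hC hσfs hσf0 hHm hq)
        (isOpen_lt continuous_id continuous_const) t
    have hbklb : ∀ ω, ((σf ω : ℝ) : EReal) ≤ bk ω := fun ω => ehit_lb ω
    have hbk0 : ∀ ω, (0 : EReal) ≤ bk ω := fun ω =>
      le_trans (by exact_mod_cast hσf0 ω) (hbklb ω)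
    set σ' : Ω' → ℝ := fun ω => if bk ω < ((τ' ω : ℝ) : EReal) then (bk ω).toReal else T
      with hσ'def
    have hσ'branch : ∀ ω, ω ∈ C → σ' ω = (bk ω).toReal := by
      intro ω hω; simp only [hσ'def]; exact if_pos hω
    have hbkfin : ∀ ω, ω ∈ C → (((bk ω).toReal : ℝ) : EReal) = bk ω := by
      intro ω hω
      refine EReal.coe_toReal ?_ ?_
      · exact ne_top_of_lt hω
      · intro hb
        have := hbklb ω; rw [hb] at this; simp at this
    have hσ'le : ∀ ω, σ' ω ≤ T := by
      intro ω; simp only [hσ'def]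
      split_ifs with h
      · have h1 : bk ω ≤ ((T : ℝ) : EReal) :=
          le_trans (le_of_lt h) (EReal.coe_le_coe_iff.2 (hτ'T ω))
        have := EReal.toReal_le_toReal h1 (fun hb => by
          have := hbklb ω; rw [hb] at this; simp at this) (by simp)
        rwa [EReal.toReal_coe] at this
      · exact le_refl T
    have hσfσ' : ∀ ω, σf ω ≤ σ' ω := by
      intro ω; simp only [hσ'def]
      split_ifs with h
      · have h1 := hbklb ω
        have := EReal.toReal_le_toReal h1 (by simp) (ne_top_of_lt h)
        rwa [EReal.toReal_coe] at this
      · exact hσfT ω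
    have hσ'0 : ∀ ω, 0 ≤ σ' ω := fun ω => le_trans (hσf0 ω) (hσfσ' ω)
    have hσ's : RST F σ' := by
      intro t
      rcases le_or_gt T t with hTt | htT
      · have : {ω | σ' ω ≤ t} = univ :=
          eq_univ_of_forall fun ω => le_trans (hσ'le ω) hTt
        rw [this]; exact MeasurableSet.univ
      · have hset : {ω | σ' ω ≤ t} = ({ω | bk ω < ((τ' ω : ℝ) : EReal)} ∩
            {ω | bk ω ≤ (t : EReal)}) := by
          ext ω
          simp only [mem_setOf_eq, mem_inter_iff, hσ'def]
          split_ifs with h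
          · constructor
            · intro h1
              refine ⟨h, ?_⟩
              rw [← hbkfin ω h]
              exact EReal.coe_le_coe_iff.2 h1
            · rintro ⟨_, h2⟩
              have := EReal.toReal_le_toReal h2 (fun hb => by
                have := hbklb ω; rw [hb] at this; simp at this) (by simp)
              rwa [EReal.toReal_coe] at this
          · constructor
            · intro h1; exact absurd (lt_of_le_of_lt h1 htT) (lt_irrefl T)
            · rintro ⟨h1, _⟩; exact absurd h1 h
        rw [hset]
        exact ehit_lt_stop_meas hbkle hτ's hbk0 t
    have hCT : {ω | σ' ω < T} = C := by
      ext ω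
      simp only [mem_setOf_eq, hCdef, hσ'def]
      split_ifs with h
      · constructor
        · intro _; exact h
        · intro _
          have h1 : bk ω < ((T : ℝ) : EReal) :=
            lt_of_lt_of_le h (EReal.coe_le_coe_iff.2 (hτ'T ω))
          have h2 : (((bk ω).toReal : ℝ) : EReal) < ((T : ℝ) : EReal) := by
            rwa [hbkfin ω h]
          exact EReal.coe_lt_coe_iff.1 h2
      · simp only [lt_irrefl, false_iff]
        exact h
    have hσ'r : ∀ ω, 0 ≤ σ' ω ∧ σ' ω ≤ T := fun ω => ⟨hσ'0 ω, hσ'le ω⟩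
    have hPpos : 0 < P {ω | σ' ω < T} := by rw [hCT]; exact hPC
    have hHm2 : MAt F σ' H := mAt_mono hσ's hσfσ' hHm
    have hnoa := hNOA T hT σ' (rst_iff.2 hσ's) hσ'r hPpos H
      ⟨hHm2, Filter.Eventually.of_forall hH1⟩ ε hεpos
    -- derive the contradiction
    have hempty : ∀ ω, ω ∈ ({ω | σ' ω < T} ∩ {ω | ∃ δ : ℝ, δ < ε ∧ ∀ t : ℝ,
        σ' ω ≤ t → t ≤ T → ⟪H ω, X t ω - X (σ' ω) ω⟫ ≤ δ}) →
        0 ≤ Zproc X σf H (τ' ω) ω → False := by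
      rintro ω ⟨hω1, hω2⟩ hZ
      have hωC : ω ∈ C := by rw [← hCT]; exact hω1
      have hσ'eq : σ' ω = (bk ω).toReal := hσ'branch ω hωC
      have hZσ' : Zproc X σf H (σ' ω) ω ≤ -ε := by
        rw [hσ'eq]
        exact ehit_le_at (Zproc_cont hC σf H ω)
          (le_of_lt (hωC : bk ω < ((τ' ω : ℝ) : EReal)))
          (fun s _ hsO => le_of_lt hsO)
      have hσ'τ' : σ' ω ≤ τ' ω := by
        rw [hσ'eq]
        have h2 := EReal.toReal_le_toReal (le_of_lt hωC) (fun hb => by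
          have := hbklb ω; rw [hb] at this; simp at this) (by simp)
        rwa [EReal.toReal_coe] at h2
      obtain ⟨δ, hδ, hδall⟩ := hω2
      have hval := hδall (τ' ω) hσ'τ' (hτ'T ω)
      rw [← Zproc_sub σf H (σ' ω) (τ' ω) ω] at hval
      linarith
    have hnull : P ({ω | σ' ω < T} ∩ {ω | ∃ δ : ℝ, δ < ε ∧ ∀ t : ℝ,
        σ' ω ≤ t → t ≤ T → ⟪H ω, X t ω - X (σ' ω) ω⟫ ≤ δ}) = 0 := by
      refine measure_mono_null ?_ (ae_iff.1 hZae)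
      intro ω hω
      simp only [mem_setOf_eq]
      intro hZ
      exact hempty ω hω hZ
    rw [hnull] at hnoa
    exact lt_irrefl 0 hnoa
  -- Step 2: a.s. the gain process is nonnegative on [σf, τ']
  have hstep2 : ∀ᵐ ω ∂P, ∀ t : ℝ, σf ω ≤ t → t ≤ τ' ω → 0 ≤ Zproc X σf H t ω := by
    have hall : ∀ᵐ ω ∂P, ∀ k : ℕ,
        ¬ (ehit σf (Zproc X σf H) {x | x < -(1 / ((k:ℝ) + 1))} ω < ((τ' ω : ℝ) : EReal)) := by
      rw [ae_all_iff]
      intro k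
      rw [ae_iff]
      simpa [not_not] using hstep1 k
    filter_upwards [hall, hZae] with ω hωk hωZ
    intro t ht1 ht2
    rcases eq_or_lt_of_le ht2 with heq | hlt2
    · rw [heq]; exact hωZ
    · by_contra hneg
      push_neg at hneg
      obtain ⟨n, hn⟩ := exists_nat_gt (1 / (-(Zproc X σf H t ω)))
      have hZneg : 0 < -(Zproc X σf H t ω) := by linarith
      have hkey : 1 / ((n:ℝ) + 1) < -(Zproc X σf H t ω) := by
        have h2 : 1 / (-(Zproc X σf H t ω)) < (n:ℝ) + 1 := by linarith
        rw [div_lt_iff₀ hZneg] at h2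
        rw [div_lt_iff₀ (by positivity)]
        nlinarith
      have hmem : Zproc X σf H t ω ∈ {x : ℝ | x < -(1 / ((n:ℝ) + 1))} := by
        simp only [mem_setOf_eq]; linarith
      have : ehit σf (Zproc X σf H) {x | x < -(1 / ((n:ℝ) + 1))} ω ≤ (t : EReal) :=
        ehit_le ht1 hmem
      exact hωk n (lt_of_le_of_lt this (EReal.coe_lt_coe_iff.2 hlt2))
  -- Step 3: conclude via TWC
  have hfinal : ∀ᵐ ω ∂P, ¬ (0 < Zproc X σf H (τ' ω) ω) := by
    filter_upwards [hstep2, hTWC'] with ω h2 hTW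
    intro hpos'
    have hmemτ : ehit σf (Zproc X σf H) {x : ℝ | 0 < x} ω ≤ ((τ' ω : ℝ) : EReal) :=
      ehit_le (hστ' ω) hpos'
    rcases lt_or_eq_of_le hmemτ with hlt | heqq
    · rw [hTW] at hlt
      obtain ⟨sneg, ⟨hs1, hs2⟩, hs3⟩ := ehit_lt_dest hlt
      exact absurd (h2 sneg hs1 (le_of_lt hs3)) (not_le.2 hs2)
    · have hup : ∀ t, σf ω ≤ t → t < τ' ω → Zproc X σf H t ω ≤ 0 := by
        intro t h1 h3
        by_contra hc
        push_neg at hc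
        have hle : ehit σf (Zproc X σf H) {x : ℝ | 0 < x} ω ≤ (t : EReal) := ehit_le h1 hc
        rw [heqq] at hle
        exact absurd h3 (not_lt.2 (EReal.coe_le_coe_iff.1 hle))
      have := le_at_left (Zproc_cont hC σf H ω) (hστ' ω)
        (le_of_eq (Zproc_self σf H ω)) hup
      linarith
  have hnull2 : P {ω | 0 < Zproc X σf H (τ' ω) ω} = 0 := by
    have := ae_iff.1 hfinal
    simpa [not_not] using this
  rw [hnull2] at hZpos
  exact lt_irrefl 0 hZpos

/-! ### TWC + NOA imply no simple arbitrage -/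


theorem noArb_of {X : ℝ → Ω' → EuclideanSpace ℝ (Fin D)} {P : Measure Ω'}
    [IsProbabilityMeasure P]
    (hUCr : ∀ t : ℝ, (F t : MeasurableSpace Ω') = ⨅ s : Ioi t, F (s : ℝ))
    (hAd : AdaptedProc F X) (hC : ContinuousPaths X)
    (hTWC : TWCBounded F P X) (hNOA : ∀ T : ℝ, 0 < T → NOAUpTo F P X T) :
    NoSimpleArbitrageFiniteHorizons F P X := by
  intro T hT Φ hArb
  obtain ⟨hA1, hA2⟩ := hArb
  set m := Φ.n with hm
  set s : ℕ → Ω' → ℝ := fun j ω => min (Φ.τ j ω) T with hs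
  have hs0 : ∀ ω, s 0 ω = 0 := fun ω => by
    rw [hs]; simp only [Φ.τ_zero ω]; exact min_eq_left (le_of_lt hT)
  have hsmono : ∀ j, j < m → ∀ ω, s j ω ≤ s (j + 1) ω := fun j hj ω =>
    min_le_min (Φ.τ_mono j hj ω) (le_refl T)
  have hchain : ∀ i j, i ≤ j → j ≤ m → ∀ ω, s i ω ≤ s j ω := by
    intro i j hij hjm ω
    induction j, hij using Nat.le_induction with
    | base => exact le_refl _
    | succ j hij ih =>
      exact le_trans (ih (le_trans (Nat.le_succ j) hjm)) (hsmono j (by omega) ω)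
  have hsnn : ∀ j, j ≤ m → ∀ ω, 0 ≤ s j ω := fun j hj ω =>
    (hs0 ω) ▸ hchain 0 j (Nat.zero_le j) hj ω
  have hsT : ∀ j ω, s j ω ≤ T := fun j ω => min_le_right _ _
  have hτstop : ∀ j, j ≤ m → RST F (s j) := by
    intro j hj t
    rcases lt_or_ge t T with htT | hTt
    · have hset : {ω | s j ω ≤ t} = {ω | Φ.τ j ω ≤ t} := by
        ext ω
        simp only [mem_setOf_eq, hs, min_le_iff]
        constructor
        · rintro (h | h)
          · exact h
          · exact absurd (lt_of_le_of_lt h htT) (lt_irrefl T)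
        · exact Or.inl
      rw [hset]
      have hstop : MeasurableSet[F (min t T)] {ω | Φ.τ j ω ≤ t} := rst_iff.1 (Φ.τ_stopping j hj) t
      rwa [min_eq_left (le_of_lt htT)] at hstop
    · have : {ω | s j ω ≤ t} = univ :=
        eq_univ_of_forall fun ω => le_trans (hsT j ω) hTt
      rw [this]; exact MeasurableSet.univ
  have hφbase : ∀ j, j < m → ∀ (B : Set (EuclideanSpace ℝ (Fin D))), MeasurableSet B →
      ∀ t : ℝ, MeasurableSet[F (min t T)] (Φ.φ j ⁻¹' B ∩ {ω | Φ.τ j ω ≤ t}) := by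
    intro j hj B hB t
    have := Φ.φ_meas j hj B hB t
    rwa [show {ω | ((Φ.τ j ω : ℝ) : EReal) ≤ (t : EReal)} = {ω | Φ.τ j ω ≤ t} from
      setOf_coe_le] at this
  have hφm : ∀ j, j < m → MAt F (s j) (Φ.φ j) := by
    intro j hj
    rw [mAt_iff']
    intro B hB t
    rcases lt_or_ge t T with htT | hTt
    · have hset : {ω | s j ω ≤ t} = {ω | Φ.τ j ω ≤ t} := by
        ext ω
        simp only [mem_setOf_eq, hs, min_le_iff]
        constructor
        · rintro (h | h)
          · exact h
          · exact absurd (lt_of_le_of_lt h htT) (lt_irrefl T)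
        · exact Or.inl
      rw [hset]
      have := hφbase j hj B hB t
      rwa [min_eq_left (le_of_lt htT)] at this
    · have hset : {ω | s j ω ≤ t} = univ :=
        eq_univ_of_forall fun ω => le_trans (hsT j ω) hTt
      rw [hset, inter_univ]
      have hdecomp : Φ.φ j ⁻¹' B = ⋃ n : ℕ, (Φ.φ j ⁻¹' B ∩ {ω | Φ.τ j ω ≤ (n : ℝ)}) := by
        ext ω
        simp only [mem_iUnion, mem_inter_iff, mem_preimage, mem_setOf_eq]
        constructor
        · intro hω
          obtain ⟨n, hn⟩ := exists_nat_ge (Φ.τ j ω)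
          exact ⟨n, hω, hn⟩
        · rintro ⟨n, hn, _⟩; exact hn
      rw [hdecomp]
      refine MeasurableSet.iUnion fun n => ?_
      have := hφbase j hj B hB n
      exact F.mono (le_trans (min_le_right _ _) hTt) _ this
  set ξ : ℕ → Ω' → ℝ := fun j ω => ⟪Φ.φ j ω, X (s (j + 1) ω) ω - X (s j ω) ω⟫ with hξ
  set V : ℕ → Ω' → ℝ := fun j ω => ∑ i ∈ Finset.range j, ξ i ω with hV
  have hwe : ∀ ω, wealthEnd (fun t ω => X (min t T) ω) Φ ω = V m ω := fun ω => rfl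
  have hξm : ∀ j, j < m → MAt F (s (j + 1)) (ξ j) := by
    intro j hj
    have hjs : j + 1 ≤ m := hj
    refine mAt_of_agrees (hτstop (j + 1) hjs) ?_
    intro t
    rcases le_or_gt 0 t with ht | ht
    · refine ⟨fun ω => ⟪(if s j ω ≤ t then Φ.φ j ω else 0),
        X (min (s (j + 1) ω) t) ω - X (min (s j ω) t) ω⟫, ?_, ?_⟩
      · exact Measurable.inner (mAt_elim 0 (hτstop j (le_of_lt hj)) (hφm j hj) t)
          ((meas_stopped hAd hC (hτstop (j + 1) hjs) (hsnn (j + 1) hjs) ht).sub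
            (meas_stopped hAd hC (hτstop j (le_of_lt hj)) (hsnn j (le_of_lt hj)) ht))
      · intro ω hωt
        have h1 : s j ω ≤ t := le_trans (hsmono j hj ω) hωt
        show ξ j ω = ⟪(if s j ω ≤ t then Φ.φ j ω else 0),
          X (min (s (j + 1) ω) t) ω - X (min (s j ω) t) ω⟫
        rw [if_pos h1, min_eq_left hωt, min_eq_left h1]
    · exact ⟨fun _ => 0, measurable_const,
        fun ω hωt => absurd (lt_of_le_of_lt hωt ht) (not_lt.2 (hsnn (j + 1) hjs ω))⟩
  have hVm : ∀ j, j ≤ m → MAt F (s j) (V j) := by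
    intro j hjm
    refine mAt_of_agrees (hτstop j hjm) ?_
    intro t
    refine ⟨fun ω => ∑ i ∈ Finset.range j, (if s j ω ≤ t then ξ i ω else 0), ?_, ?_⟩
    · refine Finset.measurable_sum _ (fun i hi => ?_)
      have hij : i + 1 ≤ j := Finset.mem_range.1 hi
      have him : i < m := lt_of_lt_of_le hij hjm
      have hmAt : MAt F (s j) (ξ i) :=
        mAt_mono (hτstop j hjm) (fun ω => hchain (i + 1) j hij hjm ω) (hξm i him)
      exact mAt_elim 0 (hτstop j hjm) hmAt t
    · intro ω hωt
      show V j ω = ∑ i ∈ Finset.range j, (if s j ω ≤ t then ξ i ω else 0)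
      rw [hV]
      exact Finset.sum_congr rfl (fun i _ => (if_pos hωt).symm)
  -- the reduction to a one-step arbitrage
  have hVmzero : P {ω | V m ω < 0} = 0 := by
    have h1 : ∀ᵐ ω ∂P, ¬ (V m ω < 0) := by
      filter_upwards [hA1] with ω hω
      rw [hwe ω] at hω
      exact not_lt.2 hω
    have := ae_iff.1 h1
    simpa [not_not] using this
  have hVmpos : 0 < P {ω | 0 < V m ω} := by
    have : {ω | 0 < wealthEnd (fun t ω => X (min t T) ω) Φ ω} = {ω | 0 < V m ω} := by
      ext ω; rw [mem_setOf_eq, hwe ω]; rfl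
    rwa [this] at hA2
  obtain ⟨j, hjm, A, hAmeas, hAae, hApos⟩ :
      ∃ j, j < m ∧ ∃ A : Set Ω', (∀ t : ℝ, MeasurableSet[F t] (A ∩ {ω | s j ω ≤ t})) ∧
        (∀ᵐ ω ∂P, ω ∈ A → 0 ≤ ξ j ω) ∧ 0 < P (A ∩ {ω | 0 < ξ j ω}) := by
    by_cases hcase : ∃ i, i ≤ m ∧ 0 < P {ω | V i ω < 0}
    · obtain ⟨i0, hi0m, hi0⟩ := hcase
      classical
      set Q : ℕ → Prop := fun i => i ≤ m ∧ 0 < P {ω | V i ω < 0} with hQ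
      set j := Nat.findGreatest Q m with hjdef
      have hQj : Q j := Nat.findGreatest_spec hi0m ⟨hi0m, hi0⟩
      have hjle : j ≤ m := Nat.findGreatest_le m
      have hjm : j < m := by
        rcases lt_or_eq_of_le hjle with h | h
        · exact h
        · exfalso
          have := hQj.2
          rw [h, hVmzero] at this
          exact lt_irrefl 0 this
      have hnext : P {ω | V (j + 1) ω < 0} = 0 := by
        have hng : ¬ Q (j + 1) :=
          Nat.findGreatest_is_greatest (Nat.lt_succ_self j) (Nat.succ_le_of_lt hjm)
        by_contra hc
        exact hng ⟨Nat.succ_le_of_lt hjm, pos_iff_ne_zero.2 hc⟩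
      refine ⟨j, hjm, {ω | V j ω < 0}, ?_, ?_, ?_⟩
      · intro t
        have : {ω | V j ω < 0} = V j ⁻¹' (Iio 0) := by ext ω; simp
        rw [this]
        exact mAt_iff'.1 (hVm j hjle) (Iio 0) measurableSet_Iio t
      · have h1 : ∀ᵐ ω ∂P, ¬ (V (j + 1) ω < 0) := by
          rw [ae_iff]; simpa [not_not] using hnext
        filter_upwards [h1] with ω hω hωA
        have hsum : V (j + 1) ω = V j ω + ξ j ω := by
          rw [hV]; exact Finset.sum_range_succ _ _
        have hA' : V j ω < 0 := hωA
        have h2 : 0 ≤ V (j + 1) ω := not_lt.1 hω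
        linarith [hsum ▸ h2]
      · have hsub : {ω | V j ω < 0} ⊆
            ({ω | V j ω < 0} ∩ {ω | 0 < ξ j ω}) ∪ {ω | V (j + 1) ω < 0} := by
          intro ω hω
          by_cases hξpos : 0 < ξ j ω
          · exact Or.inl ⟨hω, hξpos⟩
          · push_neg at hξpos
            have hsum : V (j + 1) ω = V j ω + ξ j ω := by
              rw [hV]; exact Finset.sum_range_succ _ _
            have : V j ω < 0 := hω
            exact Or.inr (by rw [mem_setOf_eq, hsum]; linarith)
        have h1 : P {ω | V j ω < 0} ≤
            P ({ω | V j ω < 0} ∩ {ω | 0 < ξ j ω}) + P {ω | V (j + 1) ω < 0} :=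
          le_trans (measure_mono hsub) (measure_union_le _ _)
        rw [hnext, add_zero] at h1
        exact lt_of_lt_of_le hQj.2 h1
    · push_neg at hcase
      have hallz : ∀ i, i ≤ m → P {ω | V i ω < 0} = 0 := fun i hi =>
        le_zero_iff.1 (hcase i hi)
      classical
      have hQ'm : 0 < P {ω | 0 < V m ω} := hVmpos
      have hex : ∃ i, 0 < P {ω | 0 < V i ω} := ⟨m, hQ'm⟩
      set j1 := Nat.find hex with hj1def
      have hj1spec : 0 < P {ω | 0 < V j1 ω} := Nat.find_spec hex
      have hj1le : j1 ≤ m := Nat.find_le hQ'm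
      have hj1ne : j1 ≠ 0 := by
        intro h0
        rw [h0] at hj1spec
        have : {ω | 0 < V 0 ω} = ∅ := by
          ext ω; simp [hV]
        rw [this] at hj1spec
        simp at hj1spec
      set j := j1 - 1 with hjdef
      have hjj : j + 1 = j1 := Nat.succ_pred_eq_of_ne_zero hj1ne
      have hjlt : j < j1 := by omega
      have hjm : j < m := lt_of_lt_of_le hjlt hj1le
      have hjzero : P {ω | 0 < V j ω} = 0 :=
        le_zero_iff.1 (not_lt.1 (Nat.find_min hex hjlt))
      have hVjz : ∀ᵐ ω ∂P, V j ω = 0 := by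
        have h1 : ∀ᵐ ω ∂P, ¬ (0 < V j ω) := by
          rw [ae_iff]; simpa [not_not] using hjzero
        have h2 : ∀ᵐ ω ∂P, ¬ (V j ω < 0) := by
          rw [ae_iff]; simpa [not_not] using hallz j (le_of_lt hjm)
        filter_upwards [h1, h2] with ω hω1 hω2
        push_neg at hω1 hω2
        linarith
      have hVj1nn : ∀ᵐ ω ∂P, ¬ (V j1 ω < 0) := by
        rw [ae_iff]; simpa [not_not] using hallz j1 hj1le
      refine ⟨j, hjm, univ, ?_, ?_, ?_⟩
      · intro t
        rw [univ_inter]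
        exact hτstop j (le_of_lt hjm) t
      · filter_upwards [hVjz, hVj1nn] with ω hω1 hω2 _
        have hsum : V (j + 1) ω = V j ω + ξ j ω := by
          rw [hV]; exact Finset.sum_range_succ _ _
        rw [hjj] at hsum
        push_neg at hω2
        linarith
      · rw [univ_inter]
        -- {0 < V j1} ⊆ {0 < ξ j} ∪ {V j ≠ 0}, and the latter is null
        have hsub : {ω | 0 < V j1 ω} ⊆
            {ω | 0 < ξ j ω} ∪ ({ω | 0 < V j ω} ∪ {ω | V j ω < 0}) := by
          intro ω hω
          rcases lt_trichotomy (V j ω) 0 with h | h | h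
          · exact Or.inr (Or.inr h)
          · refine Or.inl ?_
            have hsum : V (j + 1) ω = V j ω + ξ j ω := by
              rw [hV]; exact Finset.sum_range_succ _ _
            rw [hjj] at hsum
            rw [mem_setOf_eq]
            have : 0 < V j1 ω := hω
            rw [hsum, h, zero_add] at this
            exact this
          · exact Or.inr (Or.inl h)
        have h1 : P {ω | 0 < V j1 ω} ≤ P {ω | 0 < ξ j ω} +
            (P {ω | 0 < V j ω} + P {ω | V j ω < 0}) :=
          le_trans (measure_mono hsub)
            (le_trans (measure_union_le _ _) (by
              exact add_le_add (le_refl _) (measure_union_le _ _)))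
        rw [hjzero, hallz j (le_of_lt hjm), add_zero, add_zero] at h1
        exact lt_of_lt_of_le hj1spec h1
  exact absurd hApos (by
    -- continue in a separate lemma-like block below
    exact noArb_core hUCr hAd hC hTWC hNOA hT
      (hτstop j (le_of_lt hjm)) (hτstop (j+1) hjm) (hsnn j (le_of_lt hjm))
      (fun ω => hsmono j hjm ω) (fun ω => hsT j ω) (fun ω => hsT (j+1) ω)
      (hφm j hjm) hAmeas hAae)

end Statement8Proof

/-- Corollary: characterization of absence of simple arbitrage on finite
time horizons for continuous processes: `X` is free of simple arbitrage on finite time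
horizons iff `X` satisfies (TWC) at bounded stopping times and (NOA) on `[0,T]` holds for
every `T > 0`. -/
theorem statement8 {Ω : Type*} {mΩ : MeasurableSpace Ω} (P : Measure Ω) [IsProbabilityMeasure P]
    (F : Filtration ℝ mΩ) (hUC : UsualConditions F P) (D : ℕ)
    (X : ℝ → Ω → EuclideanSpace ℝ (Fin D))
    (hAdapted : AdaptedProc F X) (hC : ContinuousPaths X) :
    NoSimpleArbitrageFiniteHorizons F P X ↔
      (TWCBounded F P X ∧ ∀ T : ℝ, 0 < T → NOAUpTo F P X T) := by
  obtain ⟨hUCr, _⟩ := hUC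
  constructor
  · intro hNA
    exact ⟨twc_of_noArb hUCr hAdapted hC hNA,
      fun T hT => noa_of_noArb hUCr hAdapted hC hNA T hT⟩
  · rintro ⟨hTWC, hNOA⟩
    exact noArb_of hUCr hAdapted hC hTWC hNOA

end SimpleArbitrage
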